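/- arXiv:1406.5516 — 3 statements merged into one kernel-verified Lean document; each statement's English description precedes it below -/
import Mathlib

section
/- Representation Formula: let U ⊆ ℍ be an axially symmetric s-domain and let f : U → ℍ be slice regular. Let J be a unit imaginary quaternion (J² = −1) and let x, y ∈ ℝ be such that x + Jy and x − Jy belong to U ∩ ℂ_J. Then for every unit imaginary quaternion I with x + Iy ∈ U one has f(x+Iy) = (1/2)[f(x+Jy) + f(x−Jy)] + I·(1/2)·J·[f(x−Jy) − f(x+Jy)], equivalently f(x+Iy) = (1/2)(1−IJ) f(x+Jy) + (1/2)(1+IJ) f(x−Jy). -/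
noncomputable section

/-- The complex plane `ℂ_I = {x + I y : x, y ∈ ℝ}` inside the quaternions, for a
unit imaginary quaternion `I`. -/
def slicePlane (I : Quaternion ℝ) : Set (Quaternion ℝ) :=
  {q | ∃ x y : ℝ, q = (x : Quaternion ℝ) + y • I}

/-- A set `U ⊆ ℍ` is axially symmetric if `x + I y ∈ U` implies `x + J y ∈ U`
for all unit imaginary quaternions `J`. -/
def AxiallySymmetric (U : Set (Quaternion ℝ)) : Prop :=
  ∀ (x y : ℝ) (I J : Quaternion ℝ), I ^ 2 = -1 → J ^ 2 = -1 →
    ((x : Quaternion ℝ) + y • I) ∈ U → ((x : Quaternion ℝ) + y • J) ∈ U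

/-- `f` is slice regular on `U`: it is real differentiable on `U` and for every unit
imaginary quaternion `I` its restriction to `U ∩ ℂ_I` satisfies
`(1/2)(∂/∂x + I ∂/∂y) f(x + I y) = 0`. -/
def SliceRegularOn (f : Quaternion ℝ → Quaternion ℝ) (U : Set (Quaternion ℝ)) : Prop :=
  DifferentiableOn ℝ f U ∧
  ∀ (I : Quaternion ℝ), I ^ 2 = -1 → ∀ x y : ℝ, ((x : Quaternion ℝ) + y • I) ∈ U →
    fderiv ℝ (fun p : ℝ × ℝ => f ((p.1 : Quaternion ℝ) + p.2 • I)) (x, y) (1, 0)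
      + I * fderiv ℝ (fun p : ℝ × ℝ => f ((p.1 : Quaternion ℝ) + p.2 • I)) (x, y) (0, 1) = 0

/-- The slice derivative of `f` at `q`, i.e. `(∂/∂x) f`. -/
def sliceDeriv (f : Quaternion ℝ → Quaternion ℝ) (q : Quaternion ℝ) : Quaternion ℝ :=
  fderiv ℝ f q 1

/-- A quaternion is a (strictly) positive real number. -/
def IsPosReal (q : Quaternion ℝ) : Prop := ∃ r : ℝ, 0 < r ∧ q = (r : Quaternion ℝ)

/-- `f ∈ 𝒩(U)`: `f` is slice regular on `U` and preserves every slice `ℂ_I`. -/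
def QIntrinsicOn (f : Quaternion ℝ → Quaternion ℝ) (U : Set (Quaternion ℝ)) : Prop :=
  SliceRegularOn f U ∧
  ∀ (I : Quaternion ℝ), I ^ 2 = -1 → ∀ q ∈ U ∩ slicePlane I, f q ∈ slicePlane I

/-- The class `𝔯(ℍ)` of axially symmetric open sets whose intersection with every
slice plane `ℂ_I` is simply connected. -/
def MemFrakR (Ω : Set (Quaternion ℝ)) : Prop :=
  IsOpen Ω ∧ AxiallySymmetric Ω ∧
  ∀ I : Quaternion ℝ, I ^ 2 = -1 → SimplyConnectedSpace ↥(Ω ∩ slicePlane I)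

/-- `S` is a Jordan region in the plane `ℂ_I`: a bounded subset of `ℂ_I`, open in `ℂ_I`,
whose boundary (inside `ℂ_I`) is a Jordan curve. -/
def IsJordanRegionIn (I : Quaternion ℝ) (S : Set (Quaternion ℝ)) : Prop :=
  S ⊆ slicePlane I ∧ Bornology.IsBounded S ∧
  IsOpen (Subtype.val ⁻¹' S : Set ↥(slicePlane I)) ∧
  ∃ γ : Circle → ↥(slicePlane I), Continuous γ ∧ Function.Injective γ ∧
    Set.range γ = frontier (Subtype.val ⁻¹' S : Set ↥(slicePlane I))

/-- The axially symmetric completion `⋃_{x+Jy ∈ Ω, I ∈ 𝕊} {x + I y}` of a subset `Ω`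
of the slice plane `ℂ_J`. -/
def axSymmCompletion (J : Quaternion ℝ) (Ω : Set (Quaternion ℝ)) : Set (Quaternion ℝ) :=
  {q | ∃ x y : ℝ, ∃ I : Quaternion ℝ, I ^ 2 = -1 ∧
    ((x : Quaternion ℝ) + y • J) ∈ Ω ∧ q = (x : Quaternion ℝ) + y • I}

/-- The first modulus of continuity `ω₁(f; δ)` of `f` on the set `K`. -/
def omega1 (f : Quaternion ℝ → Quaternion ℝ) (K : Set (Quaternion ℝ)) (δ : ℝ) : ℝ :=
  sSup {r : ℝ | ∃ u ∈ K, ∃ v ∈ K, ‖u - v‖ ≤ δ ∧ r = ‖f u - f v‖}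

namespace RepAux

variable {I J : Quaternion ℝ}

lemma mul_self_of_sq (hI : I ^ 2 = -1) : I * I = -1 := by rw [← sq]; exact hI

lemma re_zero (hI : I ^ 2 = -1) : I.re = 0 := by
  have h := mul_self_of_sq hI
  have h1 : I.re * I.re - I.imI * I.imI - I.imJ * I.imJ - I.imK * I.imK = -1 := by
    have := congrArg QuaternionAlgebra.re h; simpa [Quaternion.re_mul, Quaternion.re_one] using this
  have h2 : I.re * I.imI + I.imI * I.re + I.imJ * I.imK - I.imK * I.imJ = 0 := by
    have := congrArg QuaternionAlgebra.imI h; simpa [Quaternion.imI_mul, Quaternion.imI_one] using this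
  have h3 : I.re * I.imJ - I.imI * I.imK + I.imJ * I.re + I.imK * I.imI = 0 := by
    have := congrArg QuaternionAlgebra.imJ h; simpa [Quaternion.imJ_mul, Quaternion.imJ_one] using this
  have h4 : I.re * I.imK + I.imI * I.imJ - I.imJ * I.imI + I.imK * I.re = 0 := by
    have := congrArg QuaternionAlgebra.imK h; simpa [Quaternion.imK_mul, Quaternion.imK_one] using this
  by_contra hre
  have hi : I.imI = 0 := (mul_eq_zero.mp (by linarith)).resolve_left hre
  have hj : I.imJ = 0 := (mul_eq_zero.mp (by linarith)).resolve_left hre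
  have hk : I.imK = 0 := (mul_eq_zero.mp (by linarith)).resolve_left hre
  nlinarith

lemma im_normSq (hI : I ^ 2 = -1) : I.imI ^ 2 + I.imJ ^ 2 + I.imK ^ 2 = 1 := by
  have h := mul_self_of_sq hI
  have h1 : I.re * I.re - I.imI * I.imI - I.imJ * I.imJ - I.imK * I.imK = -1 := by
    have := congrArg QuaternionAlgebra.re h; simpa [Quaternion.re_mul, Quaternion.re_one] using this
  have h0 := re_zero hI
  nlinarith

/-- The embedding of `ℂ` onto the slice plane of `I`. -/
def emb (I : Quaternion ℝ) : ℂ →L[ℝ] Quaternion ℝ :=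
  Complex.reCLM.smulRight (1 : Quaternion ℝ) + Complex.imCLM.smulRight I

lemma emb_apply (z : ℂ) : emb I z = ((z.re : ℝ) : Quaternion ℝ) + z.im • I := by
  simp [emb]; ext <;> simp [Quaternion.re_one, Quaternion.imI_one, Quaternion.imJ_one, Quaternion.imK_one]

lemma emb_one : emb I 1 = 1 := by rw [emb_apply]; simp

lemma emb_I : emb I Complex.I = I := by rw [emb_apply]; simp

lemma emb_norm (hI : I ^ 2 = -1) (z : ℂ) : ‖emb I z‖ = ‖z‖ := by
  have h0 := re_zero hI
  have h1 := im_normSq hI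
  have hsq : Quaternion.normSq (emb I z) = z.re ^ 2 + z.im ^ 2 := by
    rw [Quaternion.normSq_def']
    simp [emb_apply, h0]
    ring_nf
    nlinarith [h1]
  have hn : ‖emb I z‖ * ‖emb I z‖ = ‖z‖ * ‖z‖ := by
    rw [← Quaternion.normSq_eq_norm_mul_self, hsq, ← sq, ← Complex.normSq_eq_norm_sq,
      Complex.normSq_apply]
    ring
  nlinarith [norm_nonneg (emb I z), norm_nonneg z]

/-- quaternionic algebra helper 1 -/
lemma alg1 (hII : I * I = -1) (hJJ : J * J = -1) (w : Quaternion ℝ) :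
    I * (((1/2 : ℝ) • (1 - I * J)) * (J * w)) = -(((1/2 : ℝ) • (1 - I * J)) * w) := by
  rw [smul_mul_assoc, mul_smul_comm, smul_mul_assoc, ← smul_neg]
  congr 1
  have h1 : (1 - I * J) * (J * w) = J * w + I * w := by
    rw [sub_mul, one_mul, mul_assoc, ← mul_assoc J J w, hJJ, neg_one_mul, mul_neg, sub_neg_eq_add]
  rw [h1, mul_add, ← mul_assoc I J w, ← mul_assoc I I w, hII, neg_one_mul, sub_mul, one_mul,
    mul_assoc I J w]
  abel

/-- quaternionic algebra helper 2 -/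
lemma alg2 (hII : I * I = -1) (hJJ : J * J = -1) (w : Quaternion ℝ) :
    I * (((1/2 : ℝ) • (1 + I * J)) * (J * w)) = ((1/2 : ℝ) • (1 + I * J)) * w := by
  rw [smul_mul_assoc, mul_smul_comm, smul_mul_assoc]
  congr 1
  have h1 : (1 + I * J) * (J * w) = J * w - I * w := by
    rw [add_mul, one_mul, mul_assoc, ← mul_assoc J J w, hJJ, neg_one_mul, mul_neg, sub_eq_add_neg]
  rw [h1, mul_sub, ← mul_assoc I J w, ← mul_assoc I I w, hII, neg_one_mul, add_mul, one_mul,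
    mul_assoc I J w]
  abel

/-- The parametrization of the slice plane of `I` by `ℝ × ℝ`. -/
def embP (I : Quaternion ℝ) : ℝ × ℝ →L[ℝ] Quaternion ℝ :=
  (ContinuousLinearMap.fst ℝ ℝ ℝ).smulRight (1 : Quaternion ℝ) +
    (ContinuousLinearMap.snd ℝ ℝ ℝ).smulRight I

lemma embP_apply (p : ℝ × ℝ) : embP I p = ((p.1 : ℝ) : Quaternion ℝ) + p.2 • I := by
  simp [embP]; ext <;> simp [Quaternion.re_one, Quaternion.imI_one, Quaternion.imJ_one, Quaternion.imK_one]

/-- Pointwise Cauchy-Riemann equation for a slice regular function. -/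
lemma CR_pt {U : Set (Quaternion ℝ)} (hUopen : IsOpen U)
    {f : Quaternion ℝ → Quaternion ℝ} (hf : SliceRegularOn f U)
    (hI : I ^ 2 = -1) (z : ℂ) (h : emb I z ∈ U) :
    fderiv ℝ f (emb I z) 1 + I * fderiv ℝ f (emb I z) I = 0 := by
  have hmem : ((z.re : ℝ) : Quaternion ℝ) + z.im • I ∈ U := by rwa [← emb_apply]
  have hdf : DifferentiableAt ℝ f (emb I z) :=
    hf.1.differentiableAt (hUopen.mem_nhds h)
  have hkey := hf.2 I hI z.re z.im hmem
  have hcomp : (fun p : ℝ × ℝ => f ((p.1 : Quaternion ℝ) + p.2 • I)) = f ∘ (embP I) := by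
    funext p; rw [Function.comp_apply, embP_apply]
  have hdP : embP I (z.re, z.im) = emb I z := by rw [embP_apply, emb_apply]
  rw [hcomp, fderiv_comp (x := (z.re, z.im)) (by rw [hdP]; exact hdf) (embP I).differentiableAt,
    (embP I).fderiv] at hkey
  simp only [ContinuousLinearMap.coe_comp', Function.comp_apply, hdP] at hkey
  have e1 : embP I ((1 : ℝ), (0 : ℝ)) = 1 := by rw [embP_apply]; simp
  have e2 : embP I ((0 : ℝ), (1 : ℝ)) = I := by rw [embP_apply]; simp
  rwa [e1, e2] at hkey

/-- identity-theorem core lemma -/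
lemma eq_zero_of_CR (hI : I ^ 2 = -1)
    (D : Set ℂ) (hD : IsOpen D) (hDc : IsPreconnected D)
    (g : ℂ → Quaternion ℝ)
    (hdiff : ∀ z ∈ D, DifferentiableAt ℝ g z)
    (hCR : ∀ z ∈ D, fderiv ℝ g z Complex.I = I * fderiv ℝ g z 1)
    (z₀ : ℂ) (hz₀ : z₀ ∈ D) (hz₀im : z₀.im = 0)
    (hvanish : ∀ z ∈ D, z.im = 0 → g z = 0)
    {z : ℂ} (hz : z ∈ D) : g z = 0 := by
  have hII := mul_self_of_sq hI
  letI : Module ℂ (Quaternion ℝ) := Module.compHom _ (Complex.liftAux I hII).toRingHom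
  have hsmul : ∀ (w : ℂ) (q : Quaternion ℝ), w • q = Complex.liftAux I hII w * q :=
    fun _ _ => rfl
  letI : IsScalarTower ℝ ℂ (Quaternion ℝ) := ⟨by
    intro r w q
    rw [hsmul, hsmul, map_smul, smul_mul_assoc]⟩
  letI : NormedSpace ℂ (Quaternion ℝ) := ⟨by
    intro w q
    rw [hsmul, Complex.liftAux_apply]
    calc ‖(algebraMap ℝ (Quaternion ℝ) w.re + w.im • I) * q‖
        = ‖algebraMap ℝ (Quaternion ℝ) w.re + w.im • I‖ * ‖q‖ := norm_mul _ _
      _ ≤ ‖w‖ * ‖q‖ := by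
          rw [show algebraMap ℝ (Quaternion ℝ) w.re + w.im • I = emb I w by
            rw [emb_apply]; congr 1]
          rw [emb_norm hI]⟩
  have hsmulI : ∀ q : Quaternion ℝ, Complex.I • q = I * q := by
    intro q; rw [hsmul, Complex.liftAux_apply]; simp
  have hdc : ∀ w ∈ D, DifferentiableAt ℂ g w := by
    intro w hw
    rw [differentiableAt_iff_restrictScalars ℝ (hdiff w hw)]
    refine ⟨(ContinuousLinearMap.id ℂ ℂ).smulRight (fderiv ℝ g w 1), ?_⟩
    refine ContinuousLinearMap.ext fun v => ?_
    have hv : v = v.re • (1 : ℂ) + v.im • Complex.I := by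
      simpa [Complex.real_smul] using (Complex.re_add_im v).symm
    rw [ContinuousLinearMap.coe_restrictScalars']
    show v • fderiv ℝ g w 1 = fderiv ℝ g w v
    conv_lhs => rw [hv]
    conv_rhs => rw [hv]
    rw [add_smul, map_add, map_smul, map_smul, smul_assoc, smul_assoc, one_smul,
      hsmulI, hCR w hw]
  have hdo : DifferentiableOn ℂ g D := fun w hw => (hdc w hw).differentiableWithinAt
  have hana : AnalyticOnNhd ℂ g D := hdo.analyticOnNhd hD
  have hfreq : ∃ᶠ w in nhdsWithin z₀ {z₀}ᶜ, g w = 0 := by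
    rw [Filter.frequently_iff]
    intro s hs
    rw [mem_nhdsWithin] at hs
    obtain ⟨u, hu, hz₀u, hus⟩ := hs
    obtain ⟨ε, hε, hball⟩ := Metric.isOpen_iff.mp (hu.inter hD) z₀ ⟨hz₀u, hz₀⟩
    refine ⟨z₀ + (ε / 2 : ℝ), hus ⟨(hball ?_).1, ?_⟩, hvanish _ (hball ?_).2 (by simp [hz₀im])⟩
    · simp [Metric.mem_ball, dist_eq_norm]
      rw [abs_of_nonneg (by positivity)]; linarith
    · simp; positivity
    · simp [Metric.mem_ball, dist_eq_norm]
      rw [abs_of_nonneg (by positivity)]; linarith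
  exact hana.eqOn_zero_of_preconnected_of_frequently_eq_zero hDc hz₀ hfreq hz

end RepAux

set_option maxHeartbeats 1000000 in
set_option synthInstance.maxHeartbeats 400000 in
open RepAux in
/-- **Representation Formula.** Let `U ⊆ ℍ` be an axially symmetric s-domain (a connected
open set whose intersection with every slice plane is connected) and `f` slice regular
on `U`. If `J² = -1` and `x ± Jy ∈ U`, then for every `I` with `I² = -1` and
`x + Iy ∈ U`,
`f(x+Iy) = (1/2)[f(x+Jy) + f(x−Jy)] + I (1/2) J [f(x−Jy) − f(x+Jy)]`, equivalently
`f(x+Iy) = (1/2)(1−IJ) f(x+Jy) + (1/2)(1+IJ) f(x−Jy)`. -/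
theorem representation_formula
    (U : Set (Quaternion ℝ)) (hUopen : IsOpen U) (hUconn : IsConnected U)
    (hUslices : ∀ I : Quaternion ℝ, I ^ 2 = -1 → IsPreconnected (U ∩ slicePlane I))
    (hUax : AxiallySymmetric U)
    (f : Quaternion ℝ → Quaternion ℝ) (hf : SliceRegularOn f U)
    (J : Quaternion ℝ) (hJ : J ^ 2 = -1) (x y : ℝ)
    (hp : ((x : Quaternion ℝ) + y • J) ∈ U) (hm : ((x : Quaternion ℝ) - y • J) ∈ U)
    (I : Quaternion ℝ) (hI : I ^ 2 = -1) (hq : ((x : Quaternion ℝ) + y • I) ∈ U) :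
    f ((x : Quaternion ℝ) + y • I)
        = (1 / 2 : ℝ) • (f ((x : Quaternion ℝ) + y • J) + f ((x : Quaternion ℝ) - y • J))
          + I * ((1 / 2 : ℝ) •
              (J * (f ((x : Quaternion ℝ) - y • J) - f ((x : Quaternion ℝ) + y • J)))) ∧
    f ((x : Quaternion ℝ) + y • I)
        = (1 / 2 : ℝ) • ((1 - I * J) * f ((x : Quaternion ℝ) + y • J))
          + (1 / 2 : ℝ) • ((1 + I * J) * f ((x : Quaternion ℝ) - y • J)) := by
  have hII := mul_self_of_sq hI
  have hJJ := mul_self_of_sq hJ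
  set D : Set ℂ := (emb I) ⁻¹' U with hDdef
  have hDopen : IsOpen D := hUopen.preimage (emb I).continuous
  have hmem : ∀ z : ℂ, z ∈ D ↔ ((z.re : Quaternion ℝ) + z.im • I) ∈ U := by
    intro z; rw [hDdef, Set.mem_preimage, emb_apply]
  have hmemJ : ∀ z ∈ D, emb J z ∈ U := by
    intro z hz
    rw [emb_apply]; exact hUax z.re z.im I J hI hJ ((hmem z).mp hz)
  have hconjD : ∀ z ∈ D, (starRingEnd ℂ) z ∈ D := by
    intro z hz
    rw [hmem]
    have hnegI : (-I) ^ 2 = -1 := by rw [neg_sq]; exact hI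
    have h := hUax z.re z.im I (-I) hI hnegI ((hmem z).mp hz)
    rw [smul_neg, ← neg_smul] at h
    simpa using h
  -- D is preconnected
  set π : Quaternion ℝ → ℂ := fun q => (q.re : ℂ) + ((-((q * I).re) : ℝ) : ℂ) * Complex.I
    with hπdef
  have hπcont : Continuous π := by
    apply Continuous.add
    · exact Complex.continuous_ofReal.comp Quaternion.continuous_re
    · exact (Complex.continuous_ofReal.comp
        ((Quaternion.continuous_re.comp (continuous_mul_right I)).neg)).mul continuous_const
  have hπemb : ∀ z : ℂ, π (emb I z) = z := by
    intro z
    have h0 := re_zero hI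
    have h1 := im_normSq hI
    have hre : (emb I z).re = z.re := by rw [emb_apply]; simp [h0]
    have hmul : ((emb I z) * I).re = -z.im := by
      rw [emb_apply, Quaternion.re_mul]
      simp [h0]
      linear_combination (-z.im) * h1
    apply Complex.ext
    · show (↑((emb I z).re) + ↑(-((emb I z) * I).re) * Complex.I : ℂ).re = z.re
      simp only [Complex.add_re, Complex.ofReal_re, Complex.mul_I_re, Complex.ofReal_im,
        neg_zero, add_zero, hre]
    · show (↑((emb I z).re) + ↑(-((emb I z) * I).re) * Complex.I : ℂ).im = z.im
      simp only [Complex.add_im, Complex.ofReal_im, Complex.mul_I_im, Complex.ofReal_re,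
        zero_add]
      rw [hmul, neg_neg]
  have himage : D = π '' (U ∩ slicePlane I) := by
    ext z
    constructor
    · intro hz
      exact ⟨emb I z, ⟨hz, ⟨z.re, z.im, emb_apply z⟩⟩, hπemb z⟩
    · rintro ⟨q, ⟨hqU, ⟨a, b, rfl⟩⟩, rfl⟩
      have hq' : ((a : Quaternion ℝ) + b • I) = emb I ⟨a, b⟩ := by
        rw [emb_apply]
      rw [hq', hπemb]
      show emb I _ ∈ U
      rw [← hq']; exact hqU
  have hDpre : IsPreconnected D := by
    rw [himage]
    exact (hUslices I hI).image π hπcont.continuousOn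
  have hxyD : (⟨x, y⟩ : ℂ) ∈ D := by rw [hmem]; exact hq
  -- find a real point in D
  obtain ⟨z₀, hz₀D, hz₀im⟩ : ∃ z₀ ∈ D, z₀.im = 0 := by
    by_cases hy : y = 0
    · exact ⟨⟨x, y⟩, hxyD, hy⟩
    · by_contra hcon
      push_neg at hcon
      have hsub : D ⊆ {w : ℂ | 0 < w.im} ∪ {w : ℂ | w.im < 0} := by
        intro w hw
        rcases lt_trichotomy w.im 0 with h | h | h
        · exact Or.inr h
        · exact absurd h (hcon w hw)
        · exact Or.inl h
      have hA : IsOpen {w : ℂ | 0 < w.im} := isOpen_lt continuous_const Complex.continuous_im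
      have hB : IsOpen {w : ℂ | w.im < 0} := isOpen_lt Complex.continuous_im continuous_const
      have hcjD := hconjD ⟨x, y⟩ hxyD
      have hcjim : (starRingEnd ℂ (⟨x, y⟩ : ℂ)).im = -y := by simp
      have hne1 : (D ∩ {w : ℂ | 0 < w.im}).Nonempty := by
        rcases lt_or_gt_of_ne hy with h | h
        · exact ⟨starRingEnd ℂ ⟨x, y⟩, hcjD, by rw [Set.mem_setOf_eq, hcjim]; linarith⟩
        · exact ⟨⟨x, y⟩, hxyD, h⟩
      have hne2 : (D ∩ {w : ℂ | w.im < 0}).Nonempty := by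
        rcases lt_or_gt_of_ne hy with h | h
        · exact ⟨⟨x, y⟩, hxyD, h⟩
        · exact ⟨starRingEnd ℂ ⟨x, y⟩, hcjD, by rw [Set.mem_setOf_eq, hcjim]; linarith⟩
      obtain ⟨w, hwD, hw1, hw2⟩ := hDpre _ _ hA hB hsub hne1 hne2
      rw [Set.mem_setOf_eq] at hw1 hw2
      linarith
  -- the comparison function g
  set c₁ : Quaternion ℝ := (1/2 : ℝ) • (1 - I * J) with hc₁
  set c₂ : Quaternion ℝ := (1/2 : ℝ) • (1 + I * J) with hc₂
  set g : ℂ → Quaternion ℝ := fun w =>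
    f (emb I w) - (c₁ * f (emb J w) + c₂ * f (emb J (starRingEnd ℂ w))) with hgdef
  -- Cauchy-Riemann equations for g on D
  have hgkey : ∀ z ∈ D, DifferentiableAt ℝ g z ∧
      fderiv ℝ g z Complex.I = I * fderiv ℝ g z 1 := by
    intro z hzD
    have hzI : emb I z ∈ U := hzD
    have hzJ : emb J z ∈ U := hmemJ z hzD
    have hzJc : emb J (starRingEnd ℂ z) ∈ U := hmemJ _ (hconjD z hzD)
    set A := fderiv ℝ f (emb I z) with hA
    set B := fderiv ℝ f (emb J z) with hB
    set C := fderiv ℝ f (emb J (starRingEnd ℂ z)) with hC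
    have hdA : DifferentiableAt ℝ f (emb I z) := hf.1.differentiableAt (hUopen.mem_nhds hzI)
    have hdB : DifferentiableAt ℝ f (emb J z) := hf.1.differentiableAt (hUopen.mem_nhds hzJ)
    have hdC : DifferentiableAt ℝ f (emb J (starRingEnd ℂ z)) :=
      hf.1.differentiableAt (hUopen.mem_nhds hzJc)
    have h1 : HasFDerivAt (fun w => f (emb I w)) (A.comp (emb I)) z :=
      hdA.hasFDerivAt.comp z (emb I).hasFDerivAt
    have h2 : HasFDerivAt (fun w => f (emb J w)) (B.comp (emb J)) z :=
      hdB.hasFDerivAt.comp z (emb J).hasFDerivAt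
    have hconj : HasFDerivAt (fun w : ℂ => (starRingEnd ℂ) w)
        (Complex.conjCLE : ℂ →L[ℝ] ℂ) z := Complex.conjCLE.hasFDerivAt
    have hinner : HasFDerivAt (fun w : ℂ => emb J (starRingEnd ℂ w))
        ((emb J).comp (Complex.conjCLE : ℂ →L[ℝ] ℂ)) z :=
      (emb J).hasFDerivAt.comp z hconj
    have h3 : HasFDerivAt (fun w => f (emb J (starRingEnd ℂ w)))
        ((C.comp (emb J)).comp (Complex.conjCLE : ℂ →L[ℝ] ℂ)) z := by
      rw [ContinuousLinearMap.comp_assoc]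
      exact hdC.hasFDerivAt.comp z hinner
    have hFd : HasFDerivAt (fun w => c₁ * f (emb J w) + c₂ * f (emb J (starRingEnd ℂ w)))
        (c₁ • (B.comp (emb J)) +
          c₂ • ((C.comp (emb J)).comp (Complex.conjCLE : ℂ →L[ℝ] ℂ))) z :=
      (h2.const_mul c₁).add (h3.const_mul c₂)
    have hg' : HasFDerivAt g
        (A.comp (emb I) - (c₁ • (B.comp (emb J)) +
          c₂ • ((C.comp (emb J)).comp (Complex.conjCLE : ℂ →L[ℝ] ℂ)))) z := h1.sub hFd
    refine ⟨hg'.differentiableAt, ?_⟩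
    rw [hg'.fderiv]
    have eA := CR_pt hUopen hf hI z hzI
    have eB := CR_pt hUopen hf hJ z hzJ
    have eC := CR_pt hUopen hf hJ _ hzJc
    rw [← hA] at eA; rw [← hB] at eB; rw [← hC] at eC
    have halg1 : ∀ w : Quaternion ℝ, I * (c₁ * (J * w)) = -(c₁ * w) := fun w => by
      rw [hc₁]; exact alg1 hII hJJ w
    have halg2 : ∀ w : Quaternion ℝ, I * (c₂ * (J * w)) = c₂ * w := fun w => by
      rw [hc₂]; exact alg2 hII hJJ w
    have happly : ∀ v : ℂ,
        (A.comp (emb I) - (c₁ • (B.comp (emb J)) +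
          c₂ • ((C.comp (emb J)).comp (Complex.conjCLE : ℂ →L[ℝ] ℂ)))) v
        = A (emb I v) - (c₁ * B (emb J v) + c₂ * C (emb J (starRingEnd ℂ v))) := by
      intro v
      simp only [ContinuousLinearMap.sub_apply, ContinuousLinearMap.add_apply,
        ContinuousLinearMap.smul_apply, ContinuousLinearMap.coe_comp', Function.comp_apply,
        ContinuousLinearEquiv.coe_coe, Complex.conjCLE_apply, smul_eq_mul]
    rw [happly, happly]
    simp only [map_one, Complex.conj_I, map_neg, emb_one, emb_I]
    have hA1 : A 1 = -(I * A I) := eq_neg_of_add_eq_zero_left eA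
    have hB1 : B 1 = -(J * B J) := eq_neg_of_add_eq_zero_left eB
    have hC1 : C 1 = -(J * C J) := eq_neg_of_add_eq_zero_left eC
    have hrhs : I * (A 1 - (c₁ * B 1 + c₂ * C 1)) = A I - c₁ * B J + c₂ * C J := by
      rw [hA1, hB1, hC1]
      simp only [mul_neg, neg_neg, mul_sub, mul_add]
      rw [← mul_assoc I I (A I), hII, neg_one_mul, neg_neg]
      rw [halg1 (B J), halg2 (C J)]
      simp only [neg_neg]
      abel
    rw [hrhs, mul_neg]
    abel
  -- g vanishes on real points of D
  have hvan : ∀ z ∈ D, z.im = 0 → g z = 0 := by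
    intro z hzD hzim
    have hcj : starRingEnd ℂ z = z := Complex.conj_eq_iff_im.mpr hzim
    have hIJ : emb I z = emb J z := by rw [emb_apply, emb_apply, hzim]; simp
    have hcsum : c₁ + c₂ = (1 : Quaternion ℝ) := by
      rw [hc₁, hc₂, ← smul_add]
      have h2 : (1 - I * J) + (1 + I * J) = (1 : Quaternion ℝ) + 1 := by abel
      rw [h2, smul_add, ← add_smul]
      norm_num
    show f (emb I z) - (c₁ * f (emb J z) + c₂ * f (emb J (starRingEnd ℂ z))) = 0
    rw [hcj, hIJ, ← add_mul, hcsum, one_mul, sub_self]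
  -- apply the identity principle
  have hg0 : g ⟨x, y⟩ = 0 :=
    eq_zero_of_CR hI D hDopen hDpre g (fun z hz => (hgkey z hz).1)
      (fun z hz => (hgkey z hz).2) z₀ hz₀D hz₀im hvan hxyD
  have hembI : emb I (⟨x, y⟩ : ℂ) = (x : Quaternion ℝ) + y • I := by rw [emb_apply]
  have hembJ : emb J (⟨x, y⟩ : ℂ) = (x : Quaternion ℝ) + y • J := by rw [emb_apply]
  have hcjxy : starRingEnd ℂ (⟨x, y⟩ : ℂ) = (⟨x, -y⟩ : ℂ) := by
    apply Complex.ext <;> simp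
  have hembJc : emb J (starRingEnd ℂ (⟨x, y⟩ : ℂ)) = (x : Quaternion ℝ) - y • J := by
    rw [hcjxy, emb_apply]
    show (x : Quaternion ℝ) + (-y) • J = _
    rw [neg_smul, ← sub_eq_add_neg]
  have hrep2 : f ((x : Quaternion ℝ) + y • I)
      = c₁ * f ((x : Quaternion ℝ) + y • J) + c₂ * f ((x : Quaternion ℝ) - y • J) := by
    have h := sub_eq_zero.mp hg0
    rwa [hembI, hembJ, hembJc] at h
  constructor
  · rw [hrep2, hc₁, hc₂, smul_mul_assoc, smul_mul_assoc, mul_smul_comm, ← smul_add, ← smul_add]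
    congr 1
    rw [sub_mul, add_mul, one_mul, one_mul, mul_sub J, mul_sub I, mul_assoc, mul_assoc]
    abel
  · rw [hrep2, hc₁, hc₂, smul_mul_assoc, smul_mul_assoc]
end
end

section
/- Let G ⊂ ℂ, G ≠ ℂ, be a nonempty simply connected domain with G ∩ ℝ ≠ ∅, let x₀ ∈ G ∩ ℝ, and let f : G → 𝔻 be the unique bijective holomorphic function onto the open unit disc 𝔻 with f(x₀) = 0 and f′(x₀) > 0 (which exists by the Riemann mapping theorem). Then the inverse f⁻¹ : 𝔻 → G is typically real if and only if G is symmetric with respect to the real axis. -/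
open Complex Metric Set Filter Topology

section Aux

lemma hasDerivAt_conj_conj {f : ℂ → ℂ} {f' z : ℂ}
    (hf : HasDerivAt f f' ((starRingEnd ℂ) z)) :
    HasDerivAt (fun w => (starRingEnd ℂ) (f ((starRingEnd ℂ) w))) ((starRingEnd ℂ) f') z := by
  rw [hasDerivAt_iff_tendsto_slope] at hf ⊢
  have hcont : Continuous (starRingEnd ℂ) := continuous_star
  have hconj : Tendsto (starRingEnd ℂ) (𝓝[≠] z) (𝓝[≠] ((starRingEnd ℂ) z)) := by
    apply tendsto_nhdsWithin_of_tendsto_nhds_of_eventually_within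
    · exact (hcont.tendsto z).mono_left nhdsWithin_le_nhds
    · filter_upwards [self_mem_nhdsWithin] with w hw
      simp only [mem_compl_iff, mem_singleton_iff] at hw ⊢
      exact fun h => hw (by simpa using congrArg (starRingEnd ℂ) h)
  have := (hcont.tendsto f').comp (hf.comp hconj)
  refine this.congr' ?_
  filter_upwards [self_mem_nhdsWithin] with w hw
  simp only [Function.comp_apply, slope_def_field]
  rw [map_div₀, map_sub]
  simp

lemma deriv_ne_zero_of_injOn {f : ℂ → ℂ} {G : Set ℂ} (hGopen : IsOpen G)
    (hfd : DifferentiableOn ℂ f G) (hinj : Set.InjOn f G) {z₀ : ℂ} (hz₀ : z₀ ∈ G) :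
    deriv f z₀ ≠ 0 := by
  intro hder
  have hana : AnalyticOnNhd ℂ f G := hfd.analyticOnNhd hGopen
  set h : ℂ → ℂ := fun z => f z - f z₀ with hh_def
  have hh : AnalyticAt ℂ h z₀ := (hana z₀ hz₀).sub analyticAt_const
  have hGnhds : G ∈ 𝓝 z₀ := hGopen.mem_nhds hz₀
  have hnev : ¬ (∀ᶠ z in 𝓝 z₀, h z = 0) := by
    intro hev
    have h2 : ∀ᶠ z in 𝓝[≠] z₀, h z = 0 ∧ z ∈ G :=
      (hev.and (hGopen.eventually_mem hz₀)).filter_mono nhdsWithin_le_nhds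
    obtain ⟨z, ⟨hz0, hzG⟩, hzne⟩ := (h2.and self_mem_nhdsWithin).exists
    exact hzne (hinj hzG hz₀ (by simpa [hh_def, sub_eq_zero] using hz0))
  have horder : analyticOrderAt h z₀ ≠ ⊤ := fun ht => hnev (analyticOrderAt_eq_top.mp ht)
  obtain ⟨n, hn⟩ : ∃ n : ℕ, analyticOrderAt h z₀ = n := by
    lift analyticOrderAt h z₀ to ℕ using horder with n hn; exact ⟨n, rfl⟩
  obtain ⟨φ, hφana, hφ0, hev⟩ := (hh.analyticOrderAt_eq_natCast (n := n)).mp hn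
  simp only [smul_eq_mul] at hev
  have hnC : (n : ℂ) ≠ 0 → True := fun _ => trivial
  have hn0 : n ≠ 0 := by
    intro h0
    apply hφ0
    have := hev.self_of_nhds
    simp [hh_def, h0] at this
    simpa using this.symm
  have hnC : (n : ℂ) ≠ 0 := by exact_mod_cast hn0
  have hderh : deriv h z₀ = 0 := by
    have : deriv h z₀ = deriv f z₀ := by
      simp [hh_def, deriv_sub_const]
    rw [this, hder]
  have hn1 : n ≠ 1 := by
    intro h1
    have hφd : HasDerivAt (fun z => (z - z₀) ^ n * φ z) (φ z₀) z₀ := by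
      have h1d : HasDerivAt (fun z => (z - z₀) ^ n) (1 : ℂ) z₀ := by
        subst h1
        simpa using ((hasDerivAt_id z₀).sub_const z₀)
      have h2d : HasDerivAt φ (deriv φ z₀) z₀ := hφana.differentiableAt.hasDerivAt
      have := h1d.fun_mul h2d
      simpa [h1] using this
    have : deriv h z₀ = φ z₀ := by
      rw [Filter.EventuallyEq.deriv_eq hev]
      exact hφd.deriv
    exact hφ0 (by rw [← this, hderh])
  have hn2 : 2 ≤ n := by omega
  set a : ℂ := φ z₀ with ha_def
  have ha0 : a ≠ 0 := hφ0
  set b : ℂ := Complex.exp (Complex.log a / n) with hb_def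
  have hbn : b ^ n = a := by
    rw [hb_def, ← Complex.exp_nat_mul, mul_div_cancel₀ _ hnC, Complex.exp_log ha0]
  have hb0 : b ≠ 0 := Complex.exp_ne_zero _
  set u : ℂ → ℂ := fun z => Complex.exp (Complex.log (φ z / a) / n) with hu_def
  have hu_ana : AnalyticAt ℂ u z₀ := by
    apply AnalyticAt.cexp
    apply AnalyticAt.div
    · apply AnalyticAt.clog (hφana.div analyticAt_const ha0)
      show φ z₀ / a ∈ Complex.slitPlane
      rw [← ha_def, div_self ha0]
      exact Complex.one_mem_slitPlane
    · exact analyticAt_const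
    · exact hnC
  have hslit : ∀ᶠ z in 𝓝 z₀, φ z / a ∈ Complex.slitPlane := by
    have hcont : ContinuousAt (fun z => φ z / a) z₀ :=
      hφana.continuousAt.div continuousAt_const ha0
    have hmem : Complex.slitPlane ∈ 𝓝 (φ z₀ / a) := by
      rw [← ha_def, div_self ha0]
      exact Complex.isOpen_slitPlane.mem_nhds Complex.one_mem_slitPlane
    exact hcont.eventually_mem hmem
  have hun : ∀ᶠ z in 𝓝 z₀, (b * u z) ^ n = φ z := by
    filter_upwards [hslit] with z hz
    have hza : φ z / a ≠ 0 := Complex.slitPlane_ne_zero hz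
    have huzn : u z ^ n = φ z / a := by
      simp only [hu_def]
      rw [← Complex.exp_nat_mul, mul_div_cancel₀ _ hnC, Complex.exp_log hza]
    rw [mul_pow, hbn, huzn, mul_comm, div_mul_cancel₀ _ ha0]
  set ψ : ℂ → ℂ := fun z => (z - z₀) * (b * u z) with hψ_def
  have hψana : AnalyticAt ℂ ψ z₀ :=
    ((analyticAt_id.sub analyticAt_const).mul (analyticAt_const.mul hu_ana))
  have huz₀ : u z₀ = 1 := by
    simp [hu_def, ← ha_def, div_self ha0, Complex.log_one]
  have hψn : ∀ᶠ z in 𝓝 z₀, h z = ψ z ^ n := by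
    filter_upwards [hev, hun] with z h1 h2
    have hx : ψ z = (z - z₀) * (b * u z) := rfl
    rw [hx, mul_pow, h2, h1]
  have hψd : HasDerivAt ψ b z₀ := by
    have h1d : HasDerivAt (fun z => z - z₀) (1 : ℂ) z₀ := (hasDerivAt_id z₀).sub_const z₀
    have h2d : HasDerivAt (fun z => b * u z) (b * deriv u z₀) z₀ :=
      hu_ana.differentiableAt.hasDerivAt.const_mul b
    have := h1d.fun_mul h2d
    simpa [huz₀] using this
  have hψstrict : HasStrictDerivAt ψ b z₀ := by
    obtain ⟨p, hp⟩ := hψana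
    have hs := hp.hasStrictDerivAt
    have hd : deriv ψ z₀ = b := hψd.deriv
    rwa [← hs.hasDerivAt.deriv, hd] at hs
  have hψ0 : ψ z₀ = 0 := by simp [hψ_def]
  have hmap : map ψ (𝓝 z₀) = 𝓝 (0 : ℂ) := by
    have := hψstrict.map_nhds_eq hb0
    rwa [hψ0] at this
  set V := {z | z ∈ G ∧ h z = ψ z ^ n} with hV_def
  have hV : V ∈ 𝓝 z₀ := by
    filter_upwards [hGopen.eventually_mem hz₀, hψn] with z h1 h2
    exact ⟨h1, h2⟩
  have himg : ψ '' V ∈ 𝓝 (0 : ℂ) := by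
    rw [← hmap]; exact image_mem_map hV
  have hprim := Complex.isPrimitiveRoot_exp n hn0
  set ζ : ℂ := Complex.exp (2 * Real.pi * Complex.I / n) with hζ_def
  have hζn : ζ ^ n = 1 := hprim.pow_eq_one
  have hζ1 : ζ ≠ 1 := by
    intro hone
    have hdvd : n ∣ 1 := hprim.dvd_of_pow_eq_one 1 (by rw [pow_one, hone])
    have := Nat.le_of_dvd one_pos hdvd
    omega
  have hW : ψ '' V ∩ (fun w => ζ * w) ⁻¹' (ψ '' V) ∈ 𝓝 (0 : ℂ) := by
    refine inter_mem himg ?_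
    have hc : ContinuousAt (fun w : ℂ => ζ * w) 0 := by fun_prop
    apply hc.preimage_mem_nhds
    simpa using himg
  have hWev : ∀ᶠ w in 𝓝[≠] (0 : ℂ), w ∈ ψ '' V ∩ (fun w => ζ * w) ⁻¹' (ψ '' V) :=
    eventually_nhdsWithin_of_eventually_nhds hW
  obtain ⟨w, hwS, hw0'⟩ := (hWev.and self_mem_nhdsWithin).exists
  have hw0 : w ≠ 0 := hw0'
  obtain ⟨⟨z₁, hz₁V, hψ1⟩, hpre⟩ := hwS
  obtain ⟨z₂, hz₂V, hψ2⟩ := hpre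
  have hfz : f z₁ = f z₂ := by
    have e1 : h z₁ = w ^ n := by rw [hz₁V.2, hψ1]
    have e2 : h z₂ = w ^ n := by rw [hz₂V.2, hψ2, mul_pow, hζn, one_mul]
    have he : h z₁ = h z₂ := by rw [e1, e2]
    simpa [hh_def, sub_left_inj] using he
  have hz12 : z₁ = z₂ := hinj hz₁V.1 hz₂V.1 hfz
  rw [hz12, hψ2] at hψ1
  exact hζ1 (mul_right_cancel₀ hw0 (hψ1.trans (one_mul w).symm))

lemma inverse_hasDerivAt {f g : ℂ → ℂ} {G : Set ℂ} (hGopen : IsOpen G)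
    (hfd : DifferentiableOn ℂ f G) (hinj : Set.InjOn f G) {z : ℂ} (hz : z ∈ G)
    (hgev : ∀ᶠ y in 𝓝 (f z), g y ∈ G ∧ f (g y) = y) :
    HasDerivAt g (deriv f z)⁻¹ (f z) := by
  have hf' : deriv f z ≠ 0 := deriv_ne_zero_of_injOn hGopen hfd hinj hz
  obtain ⟨p, hp⟩ := (hfd.analyticOnNhd hGopen) z hz
  have hstrict : HasStrictDerivAt f (deriv f z) z := by
    have hs := hp.hasStrictDerivAt
    rwa [← hs.hasDerivAt.deriv] at hs
  have hleft : ∀ᶠ x in 𝓝 z, g (f x) = x := by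
    have hcf : ContinuousAt f z := hstrict.hasDerivAt.continuousAt
    filter_upwards [hcf.eventually hgev, hGopen.eventually_mem hz] with x hx hxG
    exact hinj hx.1 hxG hx.2
  exact (hstrict.to_local_left_inverse hf' hleft).hasDerivAt

lemma eqOn_id_of_schwarz {φ : ℂ → ℂ} (hd : DifferentiableOn ℂ φ (ball 0 1))
    (hmaps : MapsTo φ (ball 0 1) (ball 0 1)) (h0 : φ 0 = 0) (h1 : deriv φ 0 = 1) :
    EqOn φ id (ball 0 1) := by
  have hmaps' : MapsTo φ (ball 0 1) (ball (φ 0) 1) := by rwa [h0]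
  have hds : ‖dslope φ 0 0‖ = 1 / 1 := by
    rw [dslope_same, h1]; norm_num
  have := Complex.affine_of_mapsTo_ball_of_norm_dslope_eq_div hd (hmaps'.mono_right ball_subset_closedBall)
    (mem_ball_self one_pos) hds
  intro z hz
  have hzz := this hz
  simpa [h0, dslope_same, h1] using hzz

lemma frequently_real_small {p : ℂ → Prop} (h : ∀ x : ℝ, x ≠ 0 → |x| < 1 → p x) :
    ∃ᶠ z in 𝓝[≠] (0 : ℂ), p z := by
  have ht : Tendsto (fun x : ℝ => (x : ℂ)) (𝓝[≠] 0) (𝓝[≠] 0) := by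
    apply tendsto_nhdsWithin_of_tendsto_nhds_of_eventually_within
    · have : Tendsto (fun x : ℝ => (x : ℂ)) (𝓝 0) (𝓝 0) := by
        simpa using (Complex.continuous_ofReal.tendsto 0)
      exact this.mono_left nhdsWithin_le_nhds
    · filter_upwards [self_mem_nhdsWithin] with x hx
      simp only [mem_compl_iff, mem_singleton_iff] at hx ⊢
      exact_mod_cast hx
  apply ht.frequently
  apply Filter.Eventually.frequently
  have hsmall : ∀ᶠ x in 𝓝 (0 : ℝ), |x| < 1 := by
    filter_upwards [Metric.ball_mem_nhds (0 : ℝ) one_pos] with x hx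
    simpa [Real.dist_eq] using hx
  filter_upwards [eventually_nhdsWithin_of_eventually_nhds hsmall, self_mem_nhdsWithin]
    with x hx hx0
  exact h x hx0 hx

lemma ball_mem_conj {w : ℂ} (hw : w ∈ ball (0 : ℂ) 1) : (starRingEnd ℂ) w ∈ ball (0 : ℂ) 1 := by
  simpa [mem_ball_zero_iff] using hw

end Aux



open Complex

/-- `g` is typically real on the unit disc `𝔻`: it is univalent (injective and
holomorphic) on `𝔻` and takes real values exactly on `𝔻 ∩ ℝ`. -/
def TypicallyReal (g : ℂ → ℂ) : Prop :=
  DifferentiableOn ℂ g (Metric.ball 0 1) ∧ Set.InjOn g (Metric.ball 0 1) ∧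
  ∀ z ∈ Metric.ball (0 : ℂ) 1, ((g z).im = 0 ↔ z.im = 0)

/-- Let `G ⊂ ℂ`, `G ≠ ℂ`, be a nonempty simply connected domain meeting the real axis,
`x₀ ∈ G ∩ ℝ`, and let `f : G → 𝔻` be the (unique) bijective holomorphic map with
`f(x₀) = 0`, `f'(x₀) > 0`. Then the inverse `f⁻¹ : 𝔻 → G` is typically real if and only
if `G` is symmetric with respect to the real axis. -/
theorem riemann_map_inverse_typically_real_iff_symmetric
    (G : Set ℂ) (hGne : G.Nonempty) (hGproper : G ≠ Set.univ)
    (hGopen : IsOpen G) (hGconn : IsConnected G) (hGsc : SimplyConnectedSpace ↥G)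
    (hGR : ∃ x : ℝ, (x : ℂ) ∈ G)
    (x₀ : ℝ) (hx₀ : (x₀ : ℂ) ∈ G)
    (f : ℂ → ℂ) (hfd : DifferentiableOn ℂ f G)
    (hfbij : Set.BijOn f G (Metric.ball 0 1))
    (hf0 : f (x₀ : ℂ) = 0) (hf' : ∃ r : ℝ, 0 < r ∧ deriv f (x₀ : ℂ) = (r : ℂ))
    (g : ℂ → ℂ) (hg : Set.InvOn g f G (Metric.ball 0 1)) :
    TypicallyReal g ↔ (∀ z ∈ G, (starRingEnd ℂ) z ∈ G) := by
  unfold TypicallyReal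
  have hgmem : ∀ w ∈ ball (0 : ℂ) 1, g w ∈ G := by
    intro w hw
    obtain ⟨z, hzG, rfl⟩ := hfbij.surjOn hw
    rw [hg.1 hzG]; exact hzG
  have hfg : ∀ w ∈ ball (0 : ℂ) 1, f (g w) = w := fun w hw => hg.2 hw
  have hgf : ∀ z ∈ G, g (f z) = z := fun z hz => hg.1 hz
  have hginj : Set.InjOn g (ball 0 1) := by
    intro w1 hw1 w2 hw2 heq
    rw [← hfg w1 hw1, ← hfg w2 hw2, heq]
  have hg0 : g 0 = (x₀ : ℂ) := by rw [← hf0, hgf _ hx₀]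
  constructor
  · -- typically real → symmetric
    rintro ⟨hgd, -, him⟩ z hz
    set h : ℂ → ℂ := fun w => (starRingEnd ℂ) (g ((starRingEnd ℂ) w)) with hh_def
    have hhd : DifferentiableOn ℂ h (ball 0 1) := by
      intro w hw
      have hgw : DifferentiableAt ℂ g ((starRingEnd ℂ) w) :=
        hgd.differentiableAt (isOpen_ball.mem_nhds (ball_mem_conj hw))
      exact (hasDerivAt_conj_conj hgw.hasDerivAt).differentiableAt.differentiableWithinAt
    have heq : EqOn g h (ball 0 1) := by
      apply AnalyticOnNhd.eqOn_of_preconnected_of_frequently_eq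
        (hgd.analyticOnNhd isOpen_ball) (hhd.analyticOnNhd isOpen_ball)
        (convex_ball (0:ℂ) 1).isPreconnected (mem_ball_self one_pos)
      apply frequently_real_small
      intro x hx0 hx1
      have hxball : (x : ℂ) ∈ ball (0 : ℂ) 1 := by
        simpa [mem_ball_zero_iff] using hx1
      have hgim : (g x).im = 0 := (him _ hxball).mpr (by simp)
      simp only [hh_def, Complex.conj_ofReal]
      exact (Complex.conj_eq_iff_im.mpr hgim).symm
    have h1 : (starRingEnd ℂ) (f z) ∈ ball (0 : ℂ) 1 := ball_mem_conj (hfbij.mapsTo hz)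
    have : g ((starRingEnd ℂ) (f z)) = (starRingEnd ℂ) z := by
      rw [heq h1]
      simp only [hh_def, Complex.conj_conj]
      rw [hgf z hz]
    rw [← this]
    exact hgmem _ h1
  · -- symmetric → typically real
    intro hsym
    obtain ⟨r, hr, hfr⟩ := hf'
    -- g is differentiable, with derivative given by inverse_hasDerivAt
    have hgdAt : ∀ w ∈ ball (0 : ℂ) 1, HasDerivAt g (deriv f (g w))⁻¹ w := by
      intro w hw
      have hzG : g w ∈ G := hgmem w hw
      have hfw : f (g w) = w := hfg w hw
      have := inverse_hasDerivAt hGopen hfd hfbij.injOn hzG (g := g) ?_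
      · rwa [hfw] at this
      · rw [hfw]
        filter_upwards [isOpen_ball.mem_nhds hw] with y hy
        exact ⟨hgmem y hy, hfg y hy⟩
    have hgd : DifferentiableOn ℂ g (ball 0 1) := fun w hw =>
      (hgdAt w hw).differentiableAt.differentiableWithinAt
    -- the reflected map F
    set F : ℂ → ℂ := fun z => (starRingEnd ℂ) (f ((starRingEnd ℂ) z)) with hF_def
    have hFdAt : ∀ z ∈ G, HasDerivAt F ((starRingEnd ℂ) (deriv f ((starRingEnd ℂ) z))) z := by
      intro z hz
      have : DifferentiableAt ℂ f ((starRingEnd ℂ) z) :=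
        hfd.differentiableAt (hGopen.mem_nhds (hsym z hz))
      exact hasDerivAt_conj_conj this.hasDerivAt
    have hFd : DifferentiableOn ℂ F G := fun z hz =>
      (hFdAt z hz).differentiableAt.differentiableWithinAt
    have hFmaps : MapsTo F G (ball 0 1) := fun z hz =>
      ball_mem_conj (hfbij.mapsTo (hsym z hz))
    have hFx₀ : F (x₀ : ℂ) = 0 := by
      simp only [hF_def, Complex.conj_ofReal, hf0, map_zero]
    -- φ = F ∘ g equals the identity by Schwarz
    have hφeq : EqOn (F ∘ g) id (ball 0 1) := by
      apply eqOn_id_of_schwarz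
      · exact hFd.comp hgd hgmem
      · exact fun w hw => hFmaps (hgmem w hw)
      · simp [Function.comp, hg0, hFx₀]
      · have hgdAt0 : HasDerivAt g ((r : ℂ))⁻¹ 0 := by
          have := hgdAt 0 (mem_ball_self one_pos)
          rwa [hg0, hfr] at this
        have hFdAt0 : HasDerivAt F (r : ℂ) (x₀ : ℂ) := by
          have := hFdAt _ hx₀
          rwa [Complex.conj_ofReal, hfr, Complex.conj_ofReal] at this
        have hcomp : HasDerivAt (F ∘ g) ((r : ℂ) * (r : ℂ)⁻¹) 0 := by
          rw [← hg0] at hFdAt0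
          exact hFdAt0.comp 0 hgdAt0
        rw [hcomp.deriv, mul_inv_cancel₀ (by exact_mod_cast hr.ne')]
    have hFf : ∀ z ∈ G, F z = f z := by
      intro z hz
      have h1 : f z ∈ ball (0 : ℂ) 1 := hfbij.mapsTo hz
      have := hφeq h1
      simpa [Function.comp, hgf z hz] using this
    -- key identity: conj (g (conj w)) = g w
    have hkey : ∀ w ∈ ball (0 : ℂ) 1, (starRingEnd ℂ) (g ((starRingEnd ℂ) w)) = g w := by
      intro w hw
      have hcw : (starRingEnd ℂ) w ∈ ball (0 : ℂ) 1 := ball_mem_conj hw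
      have hz'G : (starRingEnd ℂ) (g ((starRingEnd ℂ) w)) ∈ G := hsym _ (hgmem _ hcw)
      apply hfbij.injOn hz'G (hgmem w hw)
      have e1 : F (g ((starRingEnd ℂ) w)) = f (g ((starRingEnd ℂ) w)) :=
        hFf _ (hgmem _ hcw)
      rw [hfg _ hcw] at e1
      -- e1 : conj (f (conj (g (conj w)))) = conj w
      have : f ((starRingEnd ℂ) (g ((starRingEnd ℂ) w))) = w := by
        have := congrArg (starRingEnd ℂ) e1
        simpa [hF_def] using this
      rw [this, hfg w hw]
    refine ⟨hgd, hginj, fun w hw => ⟨?_, ?_⟩⟩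
    · intro hgim
      have h1 := hkey w hw
      have h2 : g ((starRingEnd ℂ) w) = (starRingEnd ℂ) (g w) := by
        have := congrArg (starRingEnd ℂ) h1
        simpa using this
      rw [Complex.conj_eq_iff_im.mpr hgim] at h2
      have : (starRingEnd ℂ) w = w := hginj (ball_mem_conj hw) hw h2
      exact Complex.conj_eq_iff_im.mp this
    · intro hwim
      have h1 := hkey w hw
      rw [Complex.conj_eq_iff_im.mpr hwim] at h1
      exact Complex.conj_eq_iff_im.mp h1
end

section
/- Quantitative approximation on compact balls: let R > 0, let K = {q ∈ ℍ : ‖q‖ ≤ R}, and let f : K → ℍ be continuous on K and slice regular on B(0;R) = {q : ‖q‖ < R}, with power series expansion f(q) = ∑_{k=0}^∞ q^k c_k for q ∈ B(0;R). For n ∈ ℕ define the polynomial P_n(q) = ∑_{l=0}^n q^l c_l · (n!)² / ((n−l)!(n+l)!). Then for all q ∈ K and all n ∈ ℕ one has ‖P_n(q) − f(q)‖ ≤ 3(R+1) ω₁(f; 1/√n). In particular, for every ε > 0 there exists a polynomial P with ‖f(q) − P(q)‖ < ε for all q ∈ K. -/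
noncomputable section

open Quaternion Real intervalIntegral


namespace QApprox

local notation "H" => Quaternion ℝ

lemma normSq_coe_add_smul (x y : ℝ) (I : H) (hre : I.re = 0) (hn : normSq I = 1) :
    normSq ((x : H) + y • I) = x ^ 2 + y ^ 2 := by
  rw [Quaternion.normSq_add]
  have h1 : normSq ((x : H)) = x ^ 2 := by rw [Quaternion.normSq_coe, sq]
  have h2 : normSq (y • I) = y ^ 2 := by
    rw [Quaternion.normSq_smul, hn]; ring
  have h3 : ((x : H) * star (y • I)).re = 0 := by
    simp [Quaternion.re_mul, hre]
  rw [h1, h2, h3]; ring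

lemma norm_coe_add_smul (x y : ℝ) (I : H) (hre : I.re = 0) (hn : normSq I = 1) :
    ‖(x : H) + y • I‖ = Real.sqrt (x ^ 2 + y ^ 2) := by
  have := Quaternion.normSq_eq_norm_mul_self ((x : H) + y • I)
  have h := normSq_coe_add_smul x y I hre hn
  nlinarith [norm_nonneg ((x : H) + y • I), Real.sq_sqrt (by positivity : (0:ℝ) ≤ x ^ 2 + y ^ 2),
    Real.sqrt_nonneg (x ^ 2 + y ^ 2)]

lemma exists_axis (q : H) : ∃ I : H, I.re = 0 ∧ normSq I = 1 ∧ Commute q I := by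
  by_cases hq : q - (q.re : H) = 0
  · refine ⟨⟨0,1,0,0⟩, rfl, ?_, ?_⟩
    · exact (Quaternion.normSq_def' _).trans (by norm_num)
    · have hq' : q = ((q.re : ℝ) : H) := by rwa [sub_eq_zero] at hq
      rw [hq']; exact Quaternion.coe_commute _ _
  · set p := q - (q.re : H) with hp
    have hpre : p.re = 0 := by simp [hp]
    have hnz : normSq p ≠ 0 := Quaternion.normSq_ne_zero.mpr hq
    have hpos : 0 < normSq p := lt_of_le_of_ne Quaternion.normSq_nonneg (Ne.symm hnz)
    refine ⟨(Real.sqrt (normSq p))⁻¹ • p, by simp [hpre], ?_, ?_⟩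
    · rw [Quaternion.normSq_smul]
      rw [inv_pow, Real.sq_sqrt Quaternion.normSq_nonneg]
      field_simp
    · have h2 : Commute q ((q.re : H)) := (Quaternion.coe_commute _ _).symm
      exact ((Commute.refl q).sub_right h2).smul_right _

def eI (I : H) (u : ℝ) : H := ((Real.cos u : ℝ) : H) + (Real.sin u) • I

variable {I : H}

lemma eI_zero : eI I 0 = 1 := by simp [eI]

lemma II (hre : I.re = 0) (hn : normSq I = 1) : I * I = -1 := by
  have := (Quaternion.sq_eq_neg_normSq (a := I)).mpr hre
  rw [sq] at this
  rw [this, hn]; simp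

lemma eI_mul (hre : I.re = 0) (hn : normSq I = 1) (u v : ℝ) :
    eI I u * eI I v = eI I (u + v) := by
  unfold eI
  rw [Real.cos_add, Real.sin_add]
  have hII := II hre hn
  rw [mul_add, add_mul, add_mul, smul_mul_assoc, smul_mul_assoc, mul_smul_comm,
    mul_smul_comm, hII, smul_smul]
  have h1 : (Real.sin u * Real.sin v) • (-1 : H) = -((Real.sin u * Real.sin v : ℝ) : H) := by
    rw [smul_neg, ← Algebra.algebraMap_eq_smul_one]; rfl
  have h2 : (↑(Real.cos u) : H) * ↑(Real.cos v) = ((Real.cos u * Real.cos v : ℝ) : H) := by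
    push_cast; ring
  have h3 : I * (↑(Real.cos v) : H) = Real.cos v • I := by
    rw [← Quaternion.coe_commute]; exact (Quaternion.coe_mul_eq_smul _ _)
  have h4 : (↑(Real.cos u) : H) * I = Real.cos u • I := Quaternion.coe_mul_eq_smul _ _
  rw [h1, h2, h3, h4]
  push_cast
  module

lemma eI_pow (hre : I.re = 0) (hn : normSq I = 1) (u : ℝ) (k : ℕ) :
    (eI I u) ^ k = eI I (k * u) := by
  induction k with
  | zero => simp [eI_zero]
  | succ m ih =>
      rw [pow_succ, ih, eI_mul hre hn]
      congr 1
      push_cast; ring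

lemma norm_eI (hre : I.re = 0) (hn : normSq I = 1) (u : ℝ) : ‖eI I u‖ = 1 := by
  rw [eI, norm_coe_add_smul _ _ _ hre hn, Real.cos_sq_add_sin_sq, Real.sqrt_one]

lemma norm_eI_sub_one (hre : I.re = 0) (hn : normSq I = 1) (u : ℝ) :
    ‖eI I u - 1‖ = 2 * |Real.sin (u/2)| := by
  have h1 : eI I u - 1 = ((Real.cos u - 1 : ℝ) : Quaternion ℝ) + (Real.sin u) • I := by
    rw [eI]; push_cast; module
  rw [h1, norm_coe_add_smul _ _ _ hre hn]
  have h2 : Real.cos u = 2 * Real.cos (u/2)^2 - 1 := by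
    rw [← Real.cos_two_mul]; congr 1; ring
  have h3 : (Real.cos u - 1)^2 + Real.sin u ^2 = (2 * |Real.sin (u/2)|)^2 := by
    have hs := Real.sin_sq_add_cos_sq u
    have hs2 := Real.sin_sq_add_cos_sq (u/2)
    rw [mul_pow, sq_abs]
    nlinarith
  rw [h3, Real.sqrt_sq (by positivity)]

lemma commute_eI {q : H} (h : Commute q I) (u : ℝ) : Commute q (eI I u) :=
  ((Quaternion.coe_commute _ q).symm).add_right (h.smul_right _)



/-- C1 -/
lemma integral_exp_int (m : ℤ) :
    ∫ u in (-π)..π, Complex.exp (m * u * Complex.I) =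
      if m = 0 then (2 * π : ℝ) else 0 := by
  by_cases hm : m = 0
  · simp [hm]
    push_cast
    ring
  · rw [if_neg hm]
    have hc : (m : ℂ) * Complex.I ≠ 0 := by
      simp [Complex.I_ne_zero, hm]
    have h := integral_exp_mul_complex (a := -π) (b := π) hc
    have heq : ∀ u : ℝ, (m : ℂ) * u * Complex.I = ((m : ℂ) * Complex.I) * u := by
      intro u; ring
    simp_rw [heq]
    rw [h]
    have hsin : Complex.sin ((m : ℂ) * (π : ℂ)) = 0 := by
      have : ((m : ℂ) * (π : ℂ)) = ((m * π : ℝ) : ℂ) := by push_cast; ring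
      rw [this, ← Complex.ofReal_sin, Real.sin_int_mul_pi]; simp
    have h1 : (m : ℂ) * Complex.I * (π : ℂ) = ((m : ℂ) * π) * Complex.I := by ring
    have h2 : (m : ℂ) * Complex.I * ((-π : ℝ) : ℂ) = (-((m : ℂ) * π)) * Complex.I := by
      push_cast; ring
    rw [h1, h2, Complex.exp_mul_I, Complex.exp_mul_I, Complex.cos_neg, Complex.sin_neg, hsin]
    simp

/-- C2 kernel expansion -/
lemma kernel_expand (n : ℕ) (u : ℝ) :
    (((2 * Real.cos (u/2)) ^ (2*n) : ℝ) : ℂ) =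
      ∑ j ∈ Finset.range (2*n+1),
        ((2*n).choose j : ℂ) * Complex.exp (((j : ℤ) - n) * u * Complex.I) := by
  have h2c : (2 * Complex.cos ((u : ℂ)/2))
      = Complex.exp ((u/2 : ℝ) * Complex.I) + Complex.exp (-((u/2 : ℝ) * Complex.I)) := by
    rw [Complex.cos]
    push_cast
    ring_nf
  push_cast
  rw [h2c, add_pow]
  rw [Finset.sum_congr rfl]
  intro j hj
  rw [Finset.mem_range] at hj
  have hj' : j ≤ 2*n := by omega
  rw [← Complex.exp_nat_mul, ← Complex.exp_nat_mul, ← Complex.exp_add]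
  have : (j : ℂ) * ((u/2 : ℝ) * Complex.I) + ((2*n - j : ℕ) : ℂ) * -((u/2 : ℝ) * Complex.I)
      = ((j : ℂ) - n) * u * Complex.I := by
    have : ((2*n - j : ℕ) : ℂ) = 2*(n:ℂ) - j := by
      push_cast [hj']; ring
    rw [this]; push_cast; ring
  rw [this]
  ring



/-- C3: the Fourier coefficients of the de la Vallée Poussin kernel. -/
lemma cos_kernel_integral (n k : ℕ) :
    ∫ u in (-π)..π, Real.cos (k*u) * (2*Real.cos (u/2))^(2*n) =
      if k ≤ n then 2*π*((2*n).choose (n-k)) else 0 := by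
  set G : ℕ → ℝ → ℂ := fun j u => ((2*n).choose j : ℂ)/2 *
    (Complex.exp ((((j:ℤ) - n + k : ℤ)) * u * Complex.I)
      + Complex.exp ((((j:ℤ) - n - k : ℤ)) * u * Complex.I)) with hG
  have hpt : ∀ u : ℝ, ((Real.cos (k*u) * (2*Real.cos (u/2))^(2*n) : ℝ) : ℂ)
      = ∑ j ∈ Finset.range (2*n+1), G j u := by
    intro u
    rw [Complex.ofReal_mul, kernel_expand n u]
    have hcos : ((Real.cos (k*u) : ℝ) : ℂ)
        = (Complex.exp (((k:ℤ)) * u * Complex.I) + Complex.exp ((-(k:ℤ) : ℤ) * u * Complex.I))/2 := by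
      rw [Complex.ofReal_cos, Complex.cos]
      push_cast
      ring_nf
    rw [hcos, Finset.mul_sum]
    refine Finset.sum_congr rfl fun j hj => ?_
    rw [hG]
    simp only
    have e1 : Complex.exp ((((j:ℤ) - n + k : ℤ) : ℂ) * u * Complex.I)
        = Complex.exp (((k:ℤ) : ℂ) * u * Complex.I) * Complex.exp (((j:ℂ) - (n:ℂ)) * u * Complex.I) := by
      rw [← Complex.exp_add]; push_cast; ring_nf
    have e2 : Complex.exp ((((j:ℤ) - n - k : ℤ) : ℂ) * u * Complex.I)
        = Complex.exp (((-(k:ℤ) : ℤ) : ℂ) * u * Complex.I) * Complex.exp (((j:ℂ) - (n:ℂ)) * u * Complex.I) := by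
      rw [← Complex.exp_add]; push_cast; ring_nf
    rw [e1, e2]
    push_cast
    ring
  have hint : ∀ j : ℕ, IntervalIntegrable (G j) MeasureTheory.volume (-π) π := by
    intro j
    apply Continuous.intervalIntegrable
    fun_prop
  have hci : (((∫ u in (-π)..π, Real.cos (k*u) * (2*Real.cos (u/2))^(2*n)) : ℝ) : ℂ)
      = ∑ j ∈ Finset.range (2*n+1),
          ((2*n).choose j : ℂ)/2 *
            ((if ((j:ℤ) - n + k : ℤ) = 0 then ((2*π:ℝ):ℂ) else 0)
              + (if ((j:ℤ) - n - k : ℤ) = 0 then ((2*π:ℝ):ℂ) else 0)) := by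
    rw [← intervalIntegral.integral_ofReal]
    calc (∫ u in (-π)..π, ((Real.cos (k*u) * (2*Real.cos (u/2))^(2*n) : ℝ) : ℂ))
        = ∫ u in (-π)..π, ∑ j ∈ Finset.range (2*n+1), G j u := by
          refine intervalIntegral.integral_congr fun u _ => hpt u
      _ = ∑ j ∈ Finset.range (2*n+1), ∫ u in (-π)..π, G j u :=
          intervalIntegral.integral_finset_sum (fun j _ => hint j)
      _ = _ := by
          refine Finset.sum_congr rfl fun j hj => ?_
          rw [hG]
          simp only
          rw [intervalIntegral.integral_const_mul, intervalIntegral.integral_add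
            (Continuous.intervalIntegrable (by fun_prop) _ _)
            (Continuous.intervalIntegrable (by fun_prop) _ _),
            integral_exp_int, integral_exp_int]
          simp only [apply_ite ((↑) : ℝ → ℂ), Complex.ofReal_zero]
  -- now evaluate the RHS sum
  have key : (∑ j ∈ Finset.range (2*n+1),
          (((2*n).choose j : ℂ)/2 *
            ((if ((j:ℤ) - n + k : ℤ) = 0 then ((2*π:ℝ):ℂ) else 0)
              + (if ((j:ℤ) - n - k : ℤ) = 0 then ((2*π:ℝ):ℂ) else 0))))
      = ((if k ≤ n then 2*π*((2*n).choose (n-k)) else 0 : ℝ) : ℂ) := by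
    by_cases hk : k ≤ n
    · rw [if_pos hk]
      have hsplit : ∀ j ∈ Finset.range (2*n+1),
          ((2*n).choose j : ℂ)/2 *
            ((if ((j:ℤ) - n + k : ℤ) = 0 then ((2*π:ℝ):ℂ) else 0)
              + (if ((j:ℤ) - n - k : ℤ) = 0 then ((2*π:ℝ):ℂ) else 0))
          = (if j = n - k then ((2*n).choose j : ℂ)/2 * ((2*π:ℝ):ℂ) else 0)
            + (if j = n + k then ((2*n).choose j : ℂ)/2 * ((2*π:ℝ):ℂ) else 0) := by
        intro j hj
        have h1 : (((j:ℤ) - n + k : ℤ) = 0) ↔ j = n - k := by omega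
        have h2 : (((j:ℤ) - n - k : ℤ) = 0) ↔ j = n + k := by omega
        simp only [h1, h2]
        split_ifs with ha hb hb <;> simp_all <;> ring
      rw [Finset.sum_congr rfl hsplit, Finset.sum_add_distrib,
        Finset.sum_ite_eq' _ (n-k), Finset.sum_ite_eq' _ (n+k),
        if_pos (by simp [Finset.mem_range]; omega), if_pos (by simp [Finset.mem_range]; omega)]
      have hsymm : (2*n).choose (n+k) = (2*n).choose (n-k) := by
        have h := Nat.choose_symm (n := 2*n) (k := n+k) (by omega)
        have : 2*n - (n+k) = n - k := by omega
        rw [this] at h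
        exact h.symm
      rw [hsymm]
      push_cast
      ring
    · rw [if_neg hk]
      rw [Finset.sum_eq_zero]
      · simp
      intro j hj
      rw [Finset.mem_range] at hj
      rw [if_neg (by omega), if_neg (by omega)]
      simp
  rw [key] at hci
  exact_mod_cast hci



/-- C4 -/
lemma sin_kernel_integral (n k : ℕ) :
    ∫ u in (-π)..π, Real.sin (k*u) * (2*Real.cos (u/2))^(2*n) = 0 := by
  set g : ℝ → ℝ := fun u => Real.sin (k*u) * (2*Real.cos (u/2))^(2*n) with hg
  have hodd : ∀ u : ℝ, g (-u) = - g u := by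
    intro u
    simp only [hg]
    rw [show (k:ℝ) * -u = -(k*u) by ring, show (-u)/2 = -(u/2) by ring,
      Real.sin_neg, Real.cos_neg]
    ring
  have h := intervalIntegral.integral_comp_neg (a := -π) (b := π) g
  rw [neg_neg] at h
  have h2 : ∫ u in (-π)..π, g (-u) = ∫ u in (-π)..π, (-g u) := by
    refine intervalIntegral.integral_congr fun u _ => hodd u
  rw [h2, intervalIntegral.integral_neg] at h
  linarith

/-- C5 half -/
lemma sin_cos_pow_integral (n : ℕ) :
    ∫ u in (0:ℝ)..π, Real.sin (u/2) * Real.cos (u/2)^(2*n) = 2/(2*n+1) := by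
  have hd : ∀ u : ℝ, HasDerivAt (fun u : ℝ => -(2/(2*(n:ℝ)+1)) * Real.cos (u/2)^(2*n+1))
      (Real.sin (u/2) * Real.cos (u/2)^(2*n)) u := by
    intro u
    have h1 : HasDerivAt (fun u : ℝ => u/2) (1/2) u := (hasDerivAt_id u).div_const 2
    have h2 : HasDerivAt (fun u : ℝ => Real.cos (u/2)) (-Real.sin (u/2) * (1/2)) u := h1.cos
    have h3 := (h2.pow (2*n+1)).const_mul (-(2/(2*(n:ℝ)+1)))
    refine HasDerivAt.congr_deriv h3 ?_
    have : (2*n+1 : ℕ) - 1 = 2*n := by omega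
    rw [this]
    push_cast
    have hpos : (2*(n:ℝ)+1) ≠ 0 := by positivity
    field_simp
  rw [intervalIntegral.integral_eq_sub_of_hasDerivAt (fun u _ => hd u)
    (Continuous.intervalIntegrable (by fun_prop) _ _)]
  rw [show (0:ℝ)/2 = 0 by norm_num, Real.cos_pi_div_two, Real.cos_zero,
    zero_pow (by omega : 2*n+1 ≠ 0), one_pow]
  ring

/-- C5 -/
lemma abs_sin_kernel_integral (n : ℕ) :
    ∫ u in (-π)..π, |Real.sin (u/2)| * (2*Real.cos (u/2))^(2*n)
      = 2^(2*n+2)/(2*n+1) := by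
  set h : ℝ → ℝ := fun u => |Real.sin (u/2)| * (2*Real.cos (u/2))^(2*n) with hh
  have hcont : Continuous h := by fun_prop
  have hsplit : (∫ u in (-π)..π, h u) = (∫ u in (-π)..(0:ℝ), h u) + ∫ u in (0:ℝ)..π, h u :=
    (intervalIntegral.integral_add_adjacent_intervals
      (hcont.intervalIntegrable _ _) (hcont.intervalIntegrable _ _)).symm
  have heven : (∫ u in (-π)..(0:ℝ), h u) = ∫ u in (0:ℝ)..π, h u := by
    have h1 := intervalIntegral.integral_comp_neg (a := (0:ℝ)) (b := π) h
    rw [neg_zero] at h1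
    rw [← h1]
    refine intervalIntegral.integral_congr fun u _ => ?_
    simp only [hh]
    rw [show (-u)/2 = -(u/2) by ring, Real.sin_neg, Real.cos_neg, abs_neg]
  have hpos : (∫ u in (0:ℝ)..π, h u) = 2^(2*n+1)/(2*n+1) := by
    have : (∫ u in (0:ℝ)..π, h u) = ∫ u in (0:ℝ)..π, 2^(2*n) * (Real.sin (u/2) * Real.cos (u/2)^(2*n)) := by
      refine intervalIntegral.integral_congr fun u hu => ?_
      rw [Set.uIcc_of_le (by positivity : (0:ℝ) ≤ π)] at hu
      have h1 : 0 ≤ Real.sin (u/2) := Real.sin_nonneg_of_nonneg_of_le_pi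
        (by linarith [hu.1]) (by linarith [hu.2, Real.pi_pos])
      simp only [hh]
      rw [abs_of_nonneg h1, mul_pow]
      ring
    rw [this, intervalIntegral.integral_const_mul, sin_cos_pow_integral]
    rw [show (2:ℝ)^(2*n+1) = 2^(2*n)*2 by ring]
    field_simp
  rw [hsplit, heven, hpos]
  ring

/-- C6 square version -/
lemma sixteen_pow_le (n : ℕ) (hn : 1 ≤ n) :
    (16:ℝ)^n ≤ 4 * n * (Nat.centralBinom n : ℝ)^2 := by
  induction n with
  | zero => omega
  | succ m ih =>
    rcases Nat.eq_or_lt_of_le hn with h1 | h1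
    · simp [← h1]
      norm_num [Nat.centralBinom]
    · have hm : 1 ≤ m := by omega
      have ihm := ih hm
      have hrec : ((m+1 : ℕ) : ℝ) * (Nat.centralBinom (m+1) : ℝ)
          = 2 * (2*m+1) * (Nat.centralBinom m : ℝ) := by
        exact_mod_cast congrArg (Nat.cast : ℕ → ℝ) (Nat.succ_mul_centralBinom_succ m)
      have hmpos : (0:ℝ) < (m:ℝ) + 1 := by positivity
      have hcb : (Nat.centralBinom (m+1) : ℝ) = 2 * (2*m+1) * (Nat.centralBinom m : ℝ) / (m+1) := by
        field_simp at hrec ⊢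
        push_cast at hrec ⊢
        linarith
      rw [pow_succ, hcb]
      push_cast
      set B := (Nat.centralBinom m : ℝ) with hB
      set a := (m : ℝ) with ha
      have hBpos : (0:ℝ) ≤ B := by positivity
      have hapos : (0:ℝ) ≤ a := by positivity
      have hR : 4*(a+1)*(2*(2*a+1)*B/(a+1))^2 = 16*(2*a+1)^2*B^2/(a+1) := by
        field_simp
        ring
      rw [hR]
      rw [le_div_iff₀ (by positivity : (0:ℝ) < a + 1)]
      have h16 : (16:ℝ)^m ≤ 4*a*B^2 := by push_cast at ihm; linarith
      nlinarith [sq_nonneg B, mul_nonneg (mul_nonneg hapos hBpos) hBpos]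
  
/-- C6 -/
lemma four_pow_le (n : ℕ) (hn : 1 ≤ n) :
    (4:ℝ)^n ≤ 2 * Real.sqrt n * (Nat.centralBinom n : ℝ) := by
  have h := sixteen_pow_le n hn
  have hs : Real.sqrt n ^ 2 = n := Real.sq_sqrt (by positivity)
  have h1 : ((4:ℝ)^n)^2 ≤ (2 * Real.sqrt n * (Nat.centralBinom n : ℝ))^2 := by
    have : ((4:ℝ)^n)^2 = 16^n := by
      rw [← pow_mul, mul_comm, pow_mul]; norm_num
    rw [this]
    calc (16:ℝ)^n ≤ 4 * n * (Nat.centralBinom n : ℝ)^2 := h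
      _ = (2 * Real.sqrt n * (Nat.centralBinom n : ℝ))^2 := by
          rw [mul_pow, mul_pow, hs]; ring
  have ha : (0:ℝ) ≤ 4^n := by positivity
  have hb : (0:ℝ) ≤ 2 * Real.sqrt n * (Nat.centralBinom n : ℝ) := by positivity
  nlinarith




variable {f : H → H} {R : ℝ}

lemma omega_bddAbove (hR : 0 < R) (hf : ContinuousOn f (Metric.closedBall 0 R)) (δ : ℝ) :
    BddAbove {r : ℝ | ∃ u ∈ Metric.closedBall (0:H) R, ∃ v ∈ Metric.closedBall (0:H) R,
      ‖u - v‖ ≤ δ ∧ r = ‖f u - f v‖} := by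
  obtain ⟨M, hM⟩ := (isCompact_closedBall (0:H) R).exists_bound_of_continuousOn hf
  refine ⟨2*M, ?_⟩
  rintro r ⟨u, hu, v, hv, -, rfl⟩
  have h1 := hM u hu
  have h2 := hM v hv
  calc ‖f u - f v‖ ≤ ‖f u‖ + ‖f v‖ := norm_sub_le _ _
    _ ≤ 2*M := by linarith

lemma zero_mem_omega_set (hR : 0 < R) {δ : ℝ} (hδ : 0 ≤ δ) :
    (0:ℝ) ∈ {r : ℝ | ∃ u ∈ Metric.closedBall (0:H) R, ∃ v ∈ Metric.closedBall (0:H) R,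
      ‖u - v‖ ≤ δ ∧ r = ‖f u - f v‖} := by
  exact ⟨0, by simp [hR.le], 0, by simp [hR.le], by simpa using hδ, by simp⟩

lemma omega_nonneg (hR : 0 < R) (hf : ContinuousOn f (Metric.closedBall 0 R)) {δ : ℝ}
    (hδ : 0 ≤ δ) : 0 ≤ omega1 f (Metric.closedBall 0 R) δ :=
  le_csSup (omega_bddAbove hR hf δ) (zero_mem_omega_set hR hδ)

lemma norm_sub_le_omega (hR : 0 < R) (hf : ContinuousOn f (Metric.closedBall 0 R)) {δ : ℝ}
    {u v : H} (hu : u ∈ Metric.closedBall (0:H) R) (hv : v ∈ Metric.closedBall (0:H) R)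
    (huv : ‖u - v‖ ≤ δ) : ‖f u - f v‖ ≤ omega1 f (Metric.closedBall 0 R) δ :=
  le_csSup (omega_bddAbove hR hf δ) ⟨u, hu, v, hv, huv, rfl⟩

lemma omega_chain (hR : 0 < R) (hf : ContinuousOn f (Metric.closedBall 0 R)) {δ : ℝ}
    (hδ : 0 ≤ δ) :
    ∀ m : ℕ, 1 ≤ m → ∀ u ∈ Metric.closedBall (0:H) R, ∀ v ∈ Metric.closedBall (0:H) R,
      ‖u - v‖ ≤ m * δ → ‖f u - f v‖ ≤ m * omega1 f (Metric.closedBall 0 R) δ := by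
  intro m
  induction m with
  | zero => omega
  | succ m ih =>
    intro _ u hu v hv huv
    rcases Nat.eq_zero_or_pos m with hm | hm
    · subst hm
      simpa using norm_sub_le_omega hR hf hu hv (by simpa using huv)
    · have huv' : ‖u - v‖ ≤ ((m:ℝ)+1) * δ := by push_cast at huv; exact huv
      set θ : ℝ := (m:ℝ)/(m+1) with hθ
      have hθ0 : 0 ≤ θ := by positivity
      have hθ1 : θ ≤ 1 := by
        rw [hθ, div_le_one (by positivity)]; linarith
      set w : H := (1-θ) • u + θ • v with hw
      have hwK : w ∈ Metric.closedBall (0:H) R :=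
        (convex_closedBall (0:H) R) hu hv (by linarith) hθ0 (by ring)
      have huw : u - w = θ • (u - v) := by
        rw [hw]; module
      have hwv : w - v = (1-θ) • (u - v) := by
        rw [hw]; module
      have h1 : ‖u - w‖ ≤ m * δ := by
        rw [huw, norm_smul, Real.norm_of_nonneg hθ0]
        calc θ * ‖u - v‖ ≤ θ * ((m+1) * δ) := by
              exact mul_le_mul_of_nonneg_left huv' hθ0
          _ = m * δ := by rw [hθ]; field_simp
      have h2 : ‖w - v‖ ≤ δ := by
        rw [hwv, norm_smul, Real.norm_of_nonneg (by linarith)]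
        have h1θ : 1 - θ = 1/((m:ℝ)+1) := by rw [hθ]; field_simp; ring
        calc (1-θ) * ‖u - v‖ ≤ (1-θ) * ((m+1) * δ) := by
              exact mul_le_mul_of_nonneg_left huv' (by linarith)
          _ = δ := by rw [h1θ]; field_simp
      calc ‖f u - f v‖ ≤ ‖f u - f w‖ + ‖f w - f v‖ := norm_sub_le_norm_sub_add_norm_sub _ _ _
        _ ≤ m * omega1 f (Metric.closedBall 0 R) δ + omega1 f (Metric.closedBall 0 R) δ := by
            gcongr
            · exact ih hm u hu w hwK h1
            · exact norm_sub_le_omega hR hf hwK hv h2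
        _ = (m+1 : ℕ) * omega1 f (Metric.closedBall 0 R) δ := by push_cast; ring

lemma omega_scale (hR : 0 < R) (hf : ContinuousOn f (Metric.closedBall 0 R)) {δ t : ℝ}
    (hδ : 0 < δ) (ht : 0 ≤ t) {u v : H} (hu : u ∈ Metric.closedBall (0:H) R)
    (hv : v ∈ Metric.closedBall (0:H) R) (huv : ‖u - v‖ ≤ t) :
    ‖f u - f v‖ ≤ (t/δ + 1) * omega1 f (Metric.closedBall 0 R) δ := by
  set m : ℕ := ⌈t/δ⌉₊ with hm
  have hω0 := omega_nonneg hR hf hδ.le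
  rcases Nat.eq_zero_or_pos m with h0 | h0
  · have : t/δ ≤ 0 := by
      by_contra hcon
      have := Nat.ceil_pos.mpr (lt_of_not_ge hcon)
      omega
    have ht0 : t = 0 := le_antisymm (by
      by_contra hcon
      have : 0 < t/δ := div_pos (lt_of_not_ge hcon) hδ
      linarith) ht
    have huv0 : u = v := by
      have : ‖u - v‖ ≤ 0 := by rwa [ht0] at huv
      rwa [← sub_eq_zero, ← norm_le_zero_iff]
    rw [huv0, sub_self, norm_zero]
    have : (0:ℝ) ≤ t/δ + 1 := by positivity
    positivity
  · have h1 : ‖u - v‖ ≤ m * δ := by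
      calc ‖u - v‖ ≤ t := huv
        _ = (t/δ) * δ := by field_simp
        _ ≤ m * δ := by
            apply mul_le_mul_of_nonneg_right (Nat.le_ceil _) hδ.le
    have h2 := omega_chain hR hf hδ.le m h0 u hu v hv h1
    calc ‖f u - f v‖ ≤ m * omega1 f (Metric.closedBall 0 R) δ := h2
      _ ≤ (t/δ + 1) * omega1 f (Metric.closedBall 0 R) δ := by
          apply mul_le_mul_of_nonneg_right _ hω0
          have := Nat.ceil_lt_add_one (by positivity : 0 ≤ t/δ)
          rw [hm]
          push_cast
          linarith


end QApprox

namespace QApprox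
open MeasureTheory Real

local notation "H" => Quaternion ℝ

lemma continuous_eI (I : H) : Continuous (eI I) := by
  unfold eI
  exact (Quaternion.continuous_coe.comp Real.continuous_cos).add
    (Real.continuous_sin.smul continuous_const)

lemma summable_coeff {R : ℝ} {c : ℕ → H} {f : H → H}
    (hc : ∀ p ∈ Metric.ball (0:H) R, HasSum (fun k => p ^ k * c k) (f p))
    {q : H} (hq : ‖q‖ < R) : Summable (fun k => ‖q‖^k * ‖c k‖) := by
  have h0 : (0:ℝ) ≤ ‖q‖ := norm_nonneg q
  set r' : ℝ := (‖q‖ + R)/2 with hr'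
  have hR0 : 0 < R := lt_of_le_of_lt h0 hq
  have hr'0 : 0 < r' := by rw [hr']; positivity
  have hq_lt : ‖q‖ < r' := by rw [hr']; linarith
  have hr'R : r' < R := by rw [hr']; linarith
  have hmem : ((r' : ℝ) : H) ∈ Metric.ball (0:H) R := by
    rw [mem_ball_zero_iff, Quaternion.norm_coe, Real.norm_eq_abs, abs_of_pos hr'0]; exact hr'R
  have hsum := (hc _ hmem).summable
  have htend := hsum.norm.tendsto_atTop_zero
  obtain ⟨M, hM⟩ := htend.bddAbove_range
  have hMof : ∀ k, r'^k * ‖c k‖ ≤ M := by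
    intro k
    have : ‖((r':ℝ):H)^k * c k‖ ≤ M := hM ⟨k, rfl⟩
    rwa [norm_mul, norm_pow, Quaternion.norm_coe, Real.norm_eq_abs, abs_of_pos hr'0] at this
  have hratio : ‖q‖ / r' < 1 := (div_lt_one hr'0).mpr hq_lt
  have hratio0 : 0 ≤ ‖q‖ / r' := by positivity
  have hgeo : Summable (fun k => M * (‖q‖/r')^k) :=
    (summable_geometric_of_lt_one hratio0 hratio).mul_left M
  refine Summable.of_nonneg_of_le (fun k => by positivity) (fun k => ?_) hgeo
  have hkey : ‖q‖^k * ‖c k‖ = (‖q‖/r')^k * (r'^k * ‖c k‖) := by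
    rw [div_pow]
    field_simp
  rw [hkey, mul_comm M _]
  exact mul_le_mul_of_nonneg_left (hMof k) (by positivity)

set_option maxHeartbeats 2000000 in
theorem main_ball (R : ℝ) (hR : 0 < R) (f : H → H)
    (hfcont : ContinuousOn f (Metric.closedBall (0 : H) R))
    (c : ℕ → H)
    (hc : ∀ p ∈ Metric.ball (0 : H) R, HasSum (fun k => p ^ k * c k) (f p))
    (n : ℕ) (hn : 1 ≤ n) (q : H) (hq : ‖q‖ < R) :
    ‖(∑ l ∈ Finset.range (n + 1),
        ((n.factorial : ℝ) ^ 2 / (((n - l).factorial : ℝ) * ((n + l).factorial : ℝ)))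
          • (q ^ l * c l)) - f q‖
      ≤ 3 * (R + 1) * omega1 f (Metric.closedBall (0 : H) R) (1 / Real.sqrt n) := by
  have hπ := Real.pi_pos
  have hle : (-π : ℝ) ≤ π := by linarith
  obtain ⟨I, hre, hnI, hcomm⟩ := exists_axis q
  set Kn : ℝ → ℝ := fun u => (2*Real.cos (u/2))^(2*n) with hKn
  have hKcont : Continuous Kn := by rw [hKn]; fun_prop
  have hKnonneg : ∀ u, 0 ≤ Kn u := fun u => Even.pow_nonneg (even_two_mul n) _
  have hqK : q ∈ Metric.closedBall (0:H) R := by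
    rw [Metric.mem_closedBall, dist_zero_right]; linarith
  have hqball : q ∈ Metric.ball (0:H) R := by rwa [mem_ball_zero_iff]
  have hnorm_qe : ∀ u, ‖q * eI I u‖ = ‖q‖ := by
    intro u; rw [norm_mul, norm_eI hre hnI, mul_one]
  have hmem : ∀ u, q * eI I u ∈ Metric.ball (0:H) R := by
    intro u; rw [mem_ball_zero_iff, hnorm_qe]; exact hq
  have hqeK : ∀ u, q * eI I u ∈ Metric.closedBall (0:H) R := by
    intro u; rw [Metric.mem_closedBall, dist_zero_right, hnorm_qe]; linarith
  set C : ℕ → ℝ := fun k => if k ≤ n then 2*π*((2*n).choose (n-k)) else 0 with hC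
  set C0 : ℝ := 2*π*(((2*n).choose n : ℕ) : ℝ) with hC0
  have hcbpos : (0:ℝ) < (((2*n).choose n : ℕ) : ℝ) := by
    exact_mod_cast Nat.choose_pos (by omega)
  have hC0pos : 0 < C0 := by rw [hC0]; positivity
  have hC0eq : C 0 = C0 := by rw [hC, hC0]; simp
  set F : ℕ → ℝ → H := fun k u => Kn u • (q^k * ((eI I ((k:ℝ)*u) - 1) * c k)) with hF
  have hFcont : ∀ k, Continuous (F k) := by
    intro k
    have h1 : Continuous fun u : ℝ => eI I ((k:ℝ)*u) :=
      (continuous_eI I).comp (continuous_const.mul continuous_id)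
    exact hKcont.smul (continuous_const.mul ((h1.sub continuous_const).mul continuous_const))
  -- pointwise sum
  have hptsum : ∀ u : ℝ, HasSum (fun k => F k u) (Kn u • (f (q * eI I u) - f q)) := by
    intro u
    have h1 := hc _ (hmem u)
    have h2 := hc q hqball
    have hterm : (fun k : ℕ => (q * eI I u)^k * c k - q^k * c k)
        = fun k : ℕ => q^k * ((eI I ((k:ℝ)*u) - 1) * c k) := by
      funext k
      rw [(commute_eI hcomm u).mul_pow, eI_pow hre hnI]
      noncomm_ring
    have h3 := h1.sub h2
    rw [hterm] at h3
    exact h3.const_smul (Kn u)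
  -- integrability
  have hFintIoc : ∀ k, Integrable (F k) (volume.restrict (Set.Ioc (-π) π)) := by
    intro k
    exact ((hFcont k).integrableOn_Ioc : IntegrableOn (F k) (Set.Ioc (-π) π) volume)
  have hKle : ∀ u, Kn u ≤ 2^(2*n) := by
    intro u
    rw [hKn]
    calc (2*Real.cos (u/2))^(2*n) = |2*Real.cos (u/2)|^(2*n) := ((even_two_mul n).pow_abs _).symm
      _ ≤ 2^(2*n) := by
          apply pow_le_pow_left₀ (abs_nonneg _)
          rw [abs_mul, abs_two]
          calc 2*|Real.cos (u/2)| ≤ 2*1 := by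
                have := Real.abs_cos_le_one (u/2); linarith
            _ = 2 := by norm_num
  have hFnormle : ∀ k u, ‖F k u‖ ≤ 2^(2*n) * (2 * (‖q‖^k * ‖c k‖)) := by
    intro k u
    rw [hF]
    simp only
    rw [norm_smul, Real.norm_eq_abs, abs_of_nonneg (hKnonneg u), norm_mul, norm_mul, norm_pow]
    have h1 : ‖eI I ((k:ℝ)*u) - 1‖ ≤ 2 := by
      rw [norm_eI_sub_one hre hnI]
      have := abs_sin_le_one (((k:ℝ)*u)/2)
      linarith [abs_nonneg (Real.sin (((k:ℝ)*u)/2))]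
    calc Kn u * (‖q‖^k * (‖eI I ((k:ℝ)*u) - 1‖ * ‖c k‖))
        ≤ 2^(2*n) * (‖q‖^k * (2 * ‖c k‖)) := by
          apply mul_le_mul (hKle u) _ (by positivity) (by positivity)
          apply mul_le_mul_of_nonneg_left _ (by positivity)
          exact mul_le_mul_of_nonneg_right h1 (norm_nonneg _)
      _ = 2^(2*n) * (2 * (‖q‖^k * ‖c k‖)) := by ring
  have hintnorm : ∀ k, (∫ u in Set.Ioc (-π) π, ‖F k u‖)
      ≤ (2*π) * (2^(2*n) * (2 * (‖q‖^k * ‖c k‖))) := by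
    intro k
    have hmeas : (volume (Set.Ioc (-π) π)).toReal = 2*π := by
      rw [Real.volume_Ioc, ENNReal.toReal_ofReal (by linarith)]
      ring
    calc (∫ u in Set.Ioc (-π) π, ‖F k u‖)
        ≤ ∫ _u in Set.Ioc (-π) π, 2^(2*n) * (2 * (‖q‖^k * ‖c k‖)) := by
          apply integral_mono ((hFintIoc k).norm) ((integrableOn_const_iff).mpr (Or.inr (by
            rw [Real.volume_Ioc]; exact ENNReal.ofReal_lt_top)))
          exact fun u => hFnormle k u
      _ = (2*π) * (2^(2*n) * (2 * (‖q‖^k * ‖c k‖))) := by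
          rw [setIntegral_const, smul_eq_mul, Measure.real, hmeas]
  have hsummable_int : Summable (fun k => ∫ u in Set.Ioc (-π) π, ‖F k u‖) := by
    have hmaj : Summable (fun k => (2*π) * (2^(2*n) * (2 * (‖q‖^k * ‖c k‖)))) := by
      have := summable_coeff hc hq
      exact ((this.mul_left 2).mul_left (2^(2*n))).mul_left (2*π)
    refine Summable.of_nonneg_of_le (fun k => ?_) (fun k => hintnorm k) hmaj
    exact integral_nonneg (fun u => norm_nonneg _)
  set Jtot : H := ∫ u in Set.Ioc (-π) π, Kn u • (f (q * eI I u) - f q) with hJtot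
  have hHasSumInt : HasSum (fun k => ∫ u in Set.Ioc (-π) π, F k u) Jtot := by
    have h := MeasureTheory.hasSum_integral_of_summable_integral_norm hFintIoc hsummable_int
    have heq : (∫ u in Set.Ioc (-π) π, ∑' k, F k u) = Jtot := by
      rw [hJtot]
      exact integral_congr_ae (Filter.Eventually.of_forall (fun u => (hptsum u).tsum_eq))
    rwa [heq] at h
  -- evaluate each integral
  have hC_int : ∀ k : ℕ, (∫ u in (-π)..π, Real.cos ((k:ℝ)*u) * Kn u) = C k := by
    intro k
    rw [hC]
    simp only [hKn]
    exact cos_kernel_integral n k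
  have hK_int : (∫ u in (-π)..π, Kn u) = C0 := by
    have h0 := hC_int 0
    rw [← hC0eq, ← h0]
    refine intervalIntegral.integral_congr fun u _ => ?_
    norm_num
  have hJk : ∀ k, (∫ u in Set.Ioc (-π) π, F k u) = (C k - C0) • (q^k * c k) := by
    intro k
    rw [← intervalIntegral.integral_of_le hle]
    have hdecomp : ∀ u, F k u = (Kn u * (Real.cos ((k:ℝ)*u) - 1)) • (q^k * c k)
        + (Kn u * Real.sin ((k:ℝ)*u)) • (q^k * (I * c k)) := by
      intro u
      rw [hF]
      simp only
      have he : eI I ((k:ℝ)*u) - 1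
          = ((Real.cos ((k:ℝ)*u) - 1 : ℝ) : H) + Real.sin ((k:ℝ)*u) • I := by
        rw [eI]; push_cast; module
      have hx : (((Real.cos ((k:ℝ)*u) - 1 : ℝ) : H) + Real.sin ((k:ℝ)*u) • I) * c k
          = (Real.cos ((k:ℝ)*u) - 1) • c k + Real.sin ((k:ℝ)*u) • (I * c k) := by
        rw [add_mul, Quaternion.coe_mul_eq_smul, smul_mul_assoc]
      rw [he, hx, mul_add, mul_smul_comm, mul_smul_comm, smul_add, smul_smul, smul_smul]
    rw [intervalIntegral.integral_congr (fun u _ => hdecomp u)]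
    rw [intervalIntegral.integral_add
      ((Continuous.intervalIntegrable (by fun_prop) _ _))
      ((Continuous.intervalIntegrable (by fun_prop) _ _)),
      intervalIntegral.integral_smul_const, intervalIntegral.integral_smul_const]
    have h1 : (∫ u in (-π)..π, Kn u * (Real.cos ((k:ℝ)*u) - 1)) = C k - C0 := by
      have ha : ∀ u, Kn u * (Real.cos ((k:ℝ)*u) - 1)
          = Real.cos ((k:ℝ)*u) * Kn u - Kn u := by intro u; ring
      rw [intervalIntegral.integral_congr (fun u _ => ha u),
        intervalIntegral.integral_sub
          ((Continuous.intervalIntegrable (by fun_prop) _ _))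
          ((Continuous.intervalIntegrable (by fun_prop) _ _)),
        hC_int, hK_int]
    have h2 : (∫ u in (-π)..π, Kn u * Real.sin ((k:ℝ)*u)) = 0 := by
      have ha : ∀ u, Kn u * Real.sin ((k:ℝ)*u) = Real.sin ((k:ℝ)*u) * (2*Real.cos (u/2))^(2*n) := by
        intro u; rw [hKn]; ring
      rw [intervalIntegral.integral_congr (fun u _ => ha u)]
      exact sin_kernel_integral n k
    rw [h1, h2, zero_smul, add_zero]
  -- identify the polynomial
  set P : H := ∑ l ∈ Finset.range (n + 1),
      ((n.factorial : ℝ) ^ 2 / (((n - l).factorial : ℝ) * ((n + l).factorial : ℝ)))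
        • (q ^ l * c l) with hP
  have hlam : ∀ l ∈ Finset.range (n+1),
      ((n.factorial : ℝ) ^ 2 / (((n - l).factorial : ℝ) * ((n + l).factorial : ℝ))) • (q ^ l * c l)
        = (C l / C0) • (q^l * c l) := by
    intro l hl
    rw [Finset.mem_range] at hl
    have hln : l ≤ n := by omega
    congr 1
    have hA := Nat.choose_mul_factorial_mul_factorial (n := 2*n) (k := n - l) (by omega)
    have h2n : 2*n - (n - l) = n + l := by omega
    rw [h2n] at hA
    have hB := Nat.choose_mul_factorial_mul_factorial (n := 2*n) (k := n) (by omega)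
    have h2n' : 2*n - n = n := by omega
    rw [h2n'] at hB
    have hA' : (((2*n).choose (n-l) : ℕ) : ℝ) * ((n-l).factorial : ℝ) * ((n+l).factorial : ℝ)
        = ((2*n).factorial : ℝ) := by exact_mod_cast congrArg (Nat.cast : ℕ → ℝ) hA
    have hB' : (((2*n).choose n : ℕ) : ℝ) * (n.factorial : ℝ) * (n.factorial : ℝ)
        = ((2*n).factorial : ℝ) := by exact_mod_cast congrArg (Nat.cast : ℕ → ℝ) hB
    rw [hC]
    simp only [if_pos hln]
    rw [hC0]
    have hf1 : (0:ℝ) < ((n-l).factorial : ℝ) := by exact_mod_cast Nat.factorial_pos _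
    have hf2 : (0:ℝ) < ((n+l).factorial : ℝ) := by exact_mod_cast Nat.factorial_pos _
    rw [div_eq_div_iff (by positivity) (by positivity)]
    linear_combination (2*π) * hB' - (2*π) * hA'
  have hsumP : HasSum (fun k => (C k / C0) • (q^k * c k)) P := by
    have h := hasSum_sum_of_ne_finset_zero (f := fun k => (C k / C0) • (q^k * c k))
      (s := Finset.range (n+1)) (L := SummationFilter.unconditional ℕ) (fun b hb => by
        rw [Finset.mem_range] at hb
        rw [hC]
        simp only [if_neg (by omega : ¬ b ≤ n)]
        rw [zero_div, zero_smul])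
    rwa [show (∑ b ∈ Finset.range (n+1), (C b / C0) • (q^b * c b)) = P by
      rw [hP]; exact (Finset.sum_congr rfl hlam).symm] at h
  have hfq : HasSum (fun k => q^k * c k) (f q) := hc q hqball
  have hsub := hsumP.sub hfq
  have hfun : (fun k => (C k/C0) • (q^k * c k) - q^k * c k)
      = fun k => C0⁻¹ • ((C k - C0) • (q^k * c k)) := by
    funext k
    rw [smul_smul, show C0⁻¹ * (C k - C0) = C k / C0 - 1 by field_simp, sub_smul, one_smul]
  rw [hfun] at hsub
  have h6 : HasSum (fun k => C0⁻¹ • ((C k - C0) • (q^k * c k))) (C0⁻¹ • Jtot) := by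
    have h := hHasSumInt
    rw [show (fun k => ∫ u in Set.Ioc (-π) π, F k u)
      = fun k => (C k - C0) • (q^k * c k) from funext hJk] at h
    exact h.const_smul C0⁻¹
  have hrep : P - f q = C0⁻¹ • Jtot := hsub.unique h6
  -- norm estimate
  set ω := omega1 f (Metric.closedBall (0:H) R) (1/Real.sqrt n) with hω
  have hn0 : (0:ℝ) < n := by exact_mod_cast hn
  have hsqn : 0 < Real.sqrt n := Real.sqrt_pos.mpr hn0
  have hω0 : 0 ≤ ω := omega_nonneg hR hfcont (by positivity)
  set G : ℝ → ℝ := fun u => Kn u * ((2*R*Real.sqrt n * |Real.sin (u/2)| + 1) * ω) with hG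
  have hptbound : ∀ u, ‖Kn u • (f (q * eI I u) - f q)‖ ≤ G u := by
    intro u
    rw [hG]
    simp only
    rw [norm_smul, Real.norm_eq_abs, abs_of_nonneg (hKnonneg u)]
    apply mul_le_mul_of_nonneg_left _ (hKnonneg u)
    have hdist : ‖q * eI I u - q‖ ≤ 2*R*|Real.sin (u/2)| := by
      have he : q * eI I u - q = q * (eI I u - 1) := by noncomm_ring
      rw [he, norm_mul, norm_eI_sub_one hre hnI]
      have := abs_nonneg (Real.sin (u/2))
      nlinarith [norm_nonneg q]
    have hsc := omega_scale hR hfcont (δ := 1/Real.sqrt n) (t := 2*R*|Real.sin (u/2)|)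
      (by positivity) (by positivity) (hqeK u) hqK hdist
    calc ‖f (q * eI I u) - f q‖
        ≤ ((2*R*|Real.sin (u/2)|)/(1/Real.sqrt n) + 1) * ω := hsc
      _ = (2*R*Real.sqrt n * |Real.sin (u/2)| + 1) * ω := by
          rw [div_div_eq_mul_div, div_one]
          ring_nf
  have hfqe_cont : Continuous (fun u => f (q * eI I u)) := by
    apply hfcont.comp_continuous (continuous_const.mul (continuous_eI I)) hqeK
  have hGcont : Continuous G := by rw [hG]; fun_prop
  have hJbound : ‖Jtot‖ ≤ ∫ u in (-π)..π, G u := by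
    rw [hJtot, ← intervalIntegral.integral_of_le hle]
    calc ‖∫ u in (-π)..π, Kn u • (f (q * eI I u) - f q)‖
        ≤ ∫ u in (-π)..π, ‖Kn u • (f (q * eI I u) - f q)‖ :=
          intervalIntegral.norm_integral_le_integral_norm hle
      _ ≤ ∫ u in (-π)..π, G u := by
          apply intervalIntegral.integral_mono_on hle
          · exact (Continuous.intervalIntegrable (by
              exact (hKcont.smul (hfqe_cont.sub continuous_const)).norm) _ _)
          · exact hGcont.intervalIntegrable _ _
          · exact fun u _ => hptbound u
  have hGval : (∫ u in (-π)..π, G u)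
      = (2*R*Real.sqrt n * ω) * (2^(2*n+2)/(2*n+1)) + ω * C0 := by
    have ha : ∀ u, G u = (2*R*Real.sqrt n * ω) * (|Real.sin (u/2)| * (2*Real.cos (u/2))^(2*n))
        + ω * Kn u := by
      intro u
      rw [hG, hKn]
      simp only
      ring
    rw [intervalIntegral.integral_congr (fun u _ => ha u),
      intervalIntegral.integral_add
        ((Continuous.intervalIntegrable (by fun_prop) _ _))
        ((Continuous.intervalIntegrable (u := fun u => ω * Kn u) (continuous_const.mul hKcont) _ _)),
      intervalIntegral.integral_const_mul, intervalIntegral.integral_const_mul,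
      abs_sin_kernel_integral, hK_int]
  -- final numeric estimate
  have hfour := four_pow_le n hn
  have hsq : Real.sqrt n ^ 2 = (n:ℝ) := Real.sq_sqrt hn0.le
  have hkey : Real.sqrt n * (2^(2*n+2)/(2*n+1)) ≤ 4 * (((2*n).choose n : ℕ) : ℝ) := by
    rw [mul_div_assoc', div_le_iff₀ (by positivity : (0:ℝ) < 2*(n:ℝ)+1)]
    have h4 : (2:ℝ)^(2*n+2) = 4 * 4^n := by
      rw [pow_add, pow_mul]
      norm_num
      ring
    rw [h4]
    have h5 : 4*Real.sqrt n*(4^n) ≤ 4*Real.sqrt n*(2*Real.sqrt n*(((2*n).choose n : ℕ) : ℝ)) :=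
      mul_le_mul_of_nonneg_left hfour (by positivity)
    nlinarith [h5, hsq, hcbpos, hn0]
  calc ‖P - f q‖ = C0⁻¹ * ‖Jtot‖ := by
        rw [hrep, norm_smul, Real.norm_eq_abs, abs_of_pos (by positivity)]
    _ ≤ C0⁻¹ * ((2*R*Real.sqrt n * ω) * (2^(2*n+2)/(2*n+1)) + ω * C0) := by
        apply mul_le_mul_of_nonneg_left _ (by positivity)
        rw [← hGval]
        exact hJbound
    _ ≤ 3 * (R + 1) * ω := by
        rw [inv_mul_le_iff₀ hC0pos]
        have hπ3 : (3:ℝ) < π := Real.pi_gt_three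
        have h1 : (2*R*Real.sqrt n * ω) * (2^(2*n+2)/(2*n+1))
            ≤ 2*R*ω * (4 * (((2*n).choose n : ℕ) : ℝ)) := by
          have := hkey
          nlinarith [hω0, hR.le, mul_nonneg (mul_nonneg (by positivity : (0:ℝ) ≤ 2*R) hsqn.le) hω0,
            div_nonneg (by positivity : (0:ℝ) ≤ (2:ℝ)^(2*n+2)) (by positivity : (0:ℝ) ≤ 2*(n:ℝ)+1)]
        have h2 : 2*R*ω * (4 * (((2*n).choose n : ℕ) : ℝ)) ≤ 2*R*ω * (2*π*(((2*n).choose n : ℕ) : ℝ)) := by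
          apply mul_le_mul_of_nonneg_left _ (by positivity)
          nlinarith [hcbpos]
        have hC0v : C0 = 2*π*(((2*n).choose n : ℕ) : ℝ) := hC0
        nlinarith [hω0, hC0pos, mul_nonneg (mul_nonneg (by positivity : (0:ℝ) ≤ 2*R) hω0) hC0pos.le,
          mul_nonneg hω0 hC0pos.le]



end QApprox


open QApprox in
/-- **Quantitative approximation on compact balls.** Let `R > 0`, `K` the closed ball of
radius `R` centered at `0` in `ℍ`, and `f : K → ℍ` continuous on `K`, slice regular on
the open ball, with power series expansion `f(q) = ∑_{k=0}^∞ q^k c_k` there. With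
`Pₙ(q) = ∑_{l=0}^n q^l c_l (n!)² / ((n−l)!(n+l)!)` one has, for all `q ∈ K` and `n ≥ 1`,
`‖Pₙ(q) − f(q)‖ ≤ 3(R+1) ω₁(f; 1/√n)`; in particular for every `ε > 0` there is a
polynomial `P` with `‖f(q) − P(q)‖ < ε` on `K`. -/
theorem quantitative_approximation_on_compact_balls
    (R : ℝ) (hR : 0 < R)
    (f : Quaternion ℝ → Quaternion ℝ)
    (hfcont : ContinuousOn f (Metric.closedBall (0 : Quaternion ℝ) R))
    (hfreg : SliceRegularOn f (Metric.ball (0 : Quaternion ℝ) R))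
    (c : ℕ → Quaternion ℝ)
    (hc : ∀ q ∈ Metric.ball (0 : Quaternion ℝ) R, HasSum (fun k => q ^ k * c k) (f q)) :
    (∀ n : ℕ, 1 ≤ n → ∀ q ∈ Metric.closedBall (0 : Quaternion ℝ) R,
      ‖(∑ l ∈ Finset.range (n + 1),
            ((n.factorial : ℝ) ^ 2 / (((n - l).factorial : ℝ) * ((n + l).factorial : ℝ)))
              • (q ^ l * c l))
          - f q‖
        ≤ 3 * (R + 1) * omega1 f (Metric.closedBall (0 : Quaternion ℝ) R)
            (1 / Real.sqrt n)) ∧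
    ∀ ε : ℝ, 0 < ε → ∃ (n : ℕ) (a : ℕ → Quaternion ℝ),
      ∀ q ∈ Metric.closedBall (0 : Quaternion ℝ) R,
        ‖f q - ∑ k ∈ Finset.range (n + 1), q ^ k * a k‖ < ε := by
  have hR' := hR
  have hmain : ∀ n : ℕ, 1 ≤ n → ∀ q ∈ Metric.closedBall (0 : Quaternion ℝ) R,
      ‖(∑ l ∈ Finset.range (n + 1),
            ((n.factorial : ℝ) ^ 2 / (((n - l).factorial : ℝ) * ((n + l).factorial : ℝ)))
              • (q ^ l * c l))
          - f q‖
        ≤ 3 * (R + 1) * omega1 f (Metric.closedBall (0 : Quaternion ℝ) R)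
            (1 / Real.sqrt n) := by
    intro n hn q hqK
    set Pn : Quaternion ℝ → Quaternion ℝ := fun x => ∑ l ∈ Finset.range (n + 1),
        ((n.factorial : ℝ) ^ 2 / (((n - l).factorial : ℝ) * ((n + l).factorial : ℝ)))
          • (x ^ l * c l) with hPn
    have hPncont : Continuous Pn := by
      rw [hPn]
      apply continuous_finset_sum
      intro l _
      exact ((continuous_pow l).mul continuous_const).const_smul
          ((n.factorial : ℝ) ^ 2 / (((n - l).factorial : ℝ) * ((n + l).factorial : ℝ)))
    have hball : ∀ x ∈ Metric.ball (0 : Quaternion ℝ) R, ‖Pn x - f x‖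
        ≤ 3 * (R + 1) * omega1 f (Metric.closedBall (0 : Quaternion ℝ) R) (1 / Real.sqrt n) := by
      intro x hx
      exact main_ball R hR f hfcont c hc n hn x (mem_ball_zero_iff.mp hx)
    show ‖Pn q - f q‖ ≤ _
    have hqcl : q ∈ closure (Metric.ball (0 : Quaternion ℝ) R) := by
      rw [closure_ball (0 : Quaternion ℝ) (ne_of_gt hR)]
      exact hqK
    haveI := mem_closure_iff_nhdsWithin_neBot.mp hqcl
    have hcont_all : ContinuousOn (fun x => ‖Pn x - f x‖) (Metric.closedBall (0 : Quaternion ℝ) R) :=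
      (hPncont.continuousOn.sub hfcont).norm
    have htend : Filter.Tendsto (fun x => ‖Pn x - f x‖)
        (nhdsWithin q (Metric.ball (0 : Quaternion ℝ) R)) (nhds ‖Pn q - f q‖) :=
      (hcont_all q hqK).mono_left (nhdsWithin_mono q Metric.ball_subset_closedBall)
    exact le_of_tendsto htend (eventually_nhdsWithin_of_forall hball)
  refine ⟨hmain, ?_⟩
  intro ε hε
  have hK : IsCompact (Metric.closedBall (0 : Quaternion ℝ) R) := isCompact_closedBall _ _
  have huc := hK.uniformContinuousOn_of_continuous hfcont
  rw [Metric.uniformContinuousOn_iff] at huc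
  have hε0 : 0 < ε / (6*(R+1)) := by positivity
  obtain ⟨δ, hδ0, hδ⟩ := huc (ε / (6*(R+1))) hε0
  obtain ⟨n, hn1, hsqrt⟩ : ∃ n : ℕ, 1 ≤ n ∧ 1/Real.sqrt n < δ := by
    refine ⟨⌈(1/δ)^2⌉₊ + 1, by omega, ?_⟩
    set m : ℕ := ⌈(1/δ)^2⌉₊ + 1 with hm
    have hmgt : (1/δ)^2 < (m : ℝ) := by
      rw [hm]
      push_cast
      calc (1/δ)^2 ≤ (⌈(1/δ)^2⌉₊ : ℝ) := Nat.le_ceil _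
        _ < (⌈(1/δ)^2⌉₊ : ℝ) + 1 := by linarith
    have hsm : 1/δ < Real.sqrt m := by
      have h1 : (0:ℝ) ≤ 1/δ := by positivity
      have := Real.sqrt_lt_sqrt (by positivity) hmgt
      rwa [Real.sqrt_sq h1] at this
    have hsmpos : 0 < Real.sqrt m := lt_of_le_of_lt (by positivity) hsm
    rw [div_lt_iff₀ hsmpos]
    calc (1:ℝ) = δ * (1/δ) := by field_simp
      _ < δ * Real.sqrt m := by
        exact mul_lt_mul_of_pos_left hsm hδ0
  have hω0 : 0 ≤ omega1 f (Metric.closedBall (0 : Quaternion ℝ) R) (1/Real.sqrt n) :=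
    QApprox.omega_nonneg hR hfcont (by positivity)
  have hωle : omega1 f (Metric.closedBall (0 : Quaternion ℝ) R) (1/Real.sqrt n) ≤ ε / (6*(R+1)) := by
    apply csSup_le
    · exact ⟨0, QApprox.zero_mem_omega_set hR (by positivity)⟩
    rintro r ⟨u, hu, v, hv, huv, rfl⟩
    have hd : dist u v < δ := by
      rw [dist_eq_norm]
      exact lt_of_le_of_lt huv hsqrt
    have := hδ u hu v hv hd
    rw [dist_eq_norm] at this
    exact this.le
  refine ⟨n, fun l => ((n.factorial : ℝ) ^ 2 /
      (((n - l).factorial : ℝ) * ((n + l).factorial : ℝ))) • c l, fun q hq => ?_⟩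
  have h := hmain n hn1 q hq
  have hrw : (∑ k ∈ Finset.range (n + 1), q ^ k *
      (((n.factorial : ℝ) ^ 2 / (((n - k).factorial : ℝ) * ((n + k).factorial : ℝ))) • c k))
      = ∑ l ∈ Finset.range (n + 1),
          ((n.factorial : ℝ) ^ 2 / (((n - l).factorial : ℝ) * ((n + l).factorial : ℝ)))
            • (q ^ l * c l) := by
    refine Finset.sum_congr rfl fun l _ => ?_
    rw [mul_smul_comm]
  rw [hrw, norm_sub_rev]
  calc ‖(∑ l ∈ Finset.range (n + 1),
        ((n.factorial : ℝ) ^ 2 / (((n - l).factorial : ℝ) * ((n + l).factorial : ℝ)))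
          • (q ^ l * c l)) - f q‖
      ≤ 3 * (R + 1) * omega1 f (Metric.closedBall (0 : Quaternion ℝ) R) (1/Real.sqrt n) := h
    _ ≤ 3 * (R + 1) * (ε / (6*(R+1))) := by
        exact mul_le_mul_of_nonneg_left hωle (by positivity)
    _ = ε / 2 := by field_simp; ring
    _ < ε := by linarith
end
end
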